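/- arXiv:2605.06953 — 6 statements merged into one kernel-verified Lean document; each statement's English description precedes it below -/
import Mathlib

section
/- For a fixed positive integer s ≥ 2, H_n/(H_n − H_{n−s}) = (n/s)·H_n − ((s−1)/(2s))·H_n + o(1) as n → ∞, where H_n is the n-th harmonic number. -/
/-- The n-th harmonic number `H_n = ∑_{k=1}^n 1/k`. -/
noncomputable def harm (n : ℕ) : ℝ := ∑ k ∈ Finset.range n, 1 / ((k : ℝ) + 1)

open Finset Filter Real

lemma harm_nonneg (n : ℕ) : 0 ≤ harm n := by
  apply Finset.sum_nonneg; intro k _; positivity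

lemma harm_le (n : ℕ) : harm n ≤ 1 + Real.log n := by
  induction n with
  | zero => simp [harm]
  | succ n ih =>
    rw [harm, Finset.sum_range_succ, ← harm]
    rcases Nat.eq_zero_or_pos n with h0 | h0
    · subst h0; simp [harm]
    · have hn : (0:ℝ) < n := by exact_mod_cast h0
      have key : 1 / ((n:ℝ) + 1) ≤ Real.log (n+1) - Real.log n := by
        have h1 : (n:ℝ)/(n+1) ≤ Real.exp (-(1/((n:ℝ)+1))) := by
          have := Real.add_one_le_exp (-(1/((n:ℝ)+1)))
          have heq : -(1/((n:ℝ)+1)) + 1 = (n:ℝ)/(n+1) := by field_simp; ring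
          linarith [heq ▸ this]
        have h2 : Real.log ((n:ℝ)/(n+1)) ≤ -(1/((n:ℝ)+1)) :=
          (Real.log_le_iff_le_exp (by positivity)).2 h1
        rw [Real.log_div (ne_of_gt hn) (by positivity)] at h2
        linarith
      push_cast
      linarith

lemma harm_add (m s : ℕ) : harm (m + s) - harm m = ∑ i ∈ Finset.range s, 1 / ((m:ℝ) + i + 1) := by
  rw [harm, Finset.sum_range_add, ← harm]
  rw [Finset.sum_congr rfl (fun i _ => by push_cast; ring_nf :
    ∀ i ∈ Finset.range s, 1 / (((m + i : ℕ) : ℝ) + 1) = 1 / ((m:ℝ) + i + 1))]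
  ring

lemma harm_sub (n s : ℕ) (h : s ≤ n) :
    harm n - harm (n - s) = ∑ i ∈ Finset.range s, 1 / ((n:ℝ) - s + i + 1) := by
  have key := harm_add (n - s) s
  rw [Nat.sub_add_cancel h] at key
  rw [key]
  exact Finset.sum_congr rfl fun i _ => by rw [Nat.cast_sub h]

lemma gauss_real (m : ℕ) : ∑ i ∈ Finset.range m, (i:ℝ) = m * ((m:ℝ) - 1) / 2 := by
  induction m with
  | zero => simp
  | succ k ih => rw [Finset.sum_range_succ, ih]; push_cast; ring

lemma key_est (s n : ℕ) (hs : 2 ≤ s) (hn : 2 * s ≤ n) :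
    |harm n / (harm n - harm (n - s))
        - (((n : ℝ) / s) * harm n - (((s : ℝ) - 1) / (2 * s)) * harm n)|
      ≤ (s : ℝ) * harm n / n := by
  set N : ℝ := (n : ℝ) with hNdef
  set S : ℝ := (s : ℝ) with hSdef
  have hS : (2:ℝ) ≤ S := by rw [hSdef]; exact_mod_cast hs
  have hS0 : 0 < S := by linarith
  have hNS : 2 * S ≤ N := by rw [hSdef, hNdef]; exact_mod_cast hn
  have hN0 : 0 < N := by linarith
  set D : ℝ := harm n - harm (n - s) with hDdef
  set c : ℝ := N / S - (S - 1) / (2 * S) with hcdef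
  set a : ℕ → ℝ := fun i => N - S + i + 1 with hadef
  have hD : D = ∑ i ∈ Finset.range s, 1 / a i := harm_sub n s (by omega)
  have ha_lb : ∀ i ∈ Finset.range s, N / 2 ≤ a i := by
    intro i hi
    have : (0:ℝ) ≤ (i:ℝ) := Nat.cast_nonneg i
    simp only [hadef]; nlinarith
  have ha_ub : ∀ i ∈ Finset.range s, a i ≤ N := by
    intro i hi
    have h1 : (i:ℝ) + 1 ≤ S := by
      rw [hSdef]; exact_mod_cast Nat.succ_le_of_lt (Finset.mem_range.1 hi)
    simp only [hadef]; linarith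
  have ha_pos : ∀ i ∈ Finset.range s, 0 < a i := fun i hi =>
    lt_of_lt_of_le (by positivity) (ha_lb i hi)
  have hDlb : S / N ≤ D := by
    rw [hD]
    calc S / N = ∑ _i ∈ Finset.range s, 1 / N := by
          rw [Finset.sum_const, Finset.card_range, nsmul_eq_mul, ← hSdef]; ring
      _ ≤ ∑ i ∈ Finset.range s, 1 / a i :=
          Finset.sum_le_sum fun i hi =>
            one_div_le_one_div_of_le (ha_pos i hi) (ha_ub i hi)
  have hD0 : 0 < D := lt_of_lt_of_le (by positivity) hDlb
  have hid : c * D - 1 = ∑ i ∈ Finset.range s, (S - 1 - 2 * i) / (2 * S * a i) := by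
    have h1 : c * D = ∑ i ∈ Finset.range s, c / a i := by
      rw [hD, Finset.mul_sum]; exact Finset.sum_congr rfl fun i _ => by ring
    have h2 : (1:ℝ) = ∑ _i ∈ Finset.range s, 1 / S := by
      rw [Finset.sum_const, Finset.card_range, nsmul_eq_mul, ← hSdef]
      field_simp
    rw [h1]; nth_rewrite 1 [h2]
    rw [← Finset.sum_sub_distrib]
    refine Finset.sum_congr rfl fun i hi => ?_
    have hai : a i ≠ 0 := (ha_pos i hi).ne'
    rw [hcdef]
    simp only [hadef] at hai ⊢
    field_simp
    ring
  have hsplit : ∀ i ∈ Finset.range s, (S - 1 - 2 * (i:ℝ)) / (2 * S * a i)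
      = (S - 1 - 2 * i) / (2 * S * N) + (S - 1 - 2 * i) * (S - 1 - i) / (2 * S * N * a i) := by
    intro i hi
    have hai : a i ≠ 0 := (ha_pos i hi).ne'
    simp only [hadef] at hai ⊢
    field_simp
    ring
  have hzero : ∑ i ∈ Finset.range s, (S - 1 - 2 * (i:ℝ)) / (2 * S * N) = 0 := by
    rw [← Finset.sum_div]
    have h1 : ∑ i ∈ Finset.range s, (S - 1 - 2 * (i:ℝ)) = 0 := by
      rw [Finset.sum_sub_distrib, Finset.sum_const, Finset.card_range, nsmul_eq_mul,
        ← Finset.mul_sum, gauss_real, ← hSdef]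
      ring
    rw [h1, zero_div]
  have hid2 : c * D - 1
      = ∑ i ∈ Finset.range s, (S - 1 - 2 * (i:ℝ)) * (S - 1 - i) / (2 * S * N * a i) := by
    rw [hid, Finset.sum_congr rfl hsplit, Finset.sum_add_distrib, hzero, zero_add]
  have habs : |c * D - 1| ≤ S * S / (N * N) := by
    rw [hid2]
    calc |∑ i ∈ Finset.range s, (S - 1 - 2 * (i:ℝ)) * (S - 1 - i) / (2 * S * N * a i)|
        ≤ ∑ i ∈ Finset.range s, |(S - 1 - 2 * (i:ℝ)) * (S - 1 - i) / (2 * S * N * a i)| :=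
          Finset.abs_sum_le_sum_abs _ _
      _ ≤ ∑ _i ∈ Finset.range s, S / (N * N) := by
          refine Finset.sum_le_sum fun i hi => ?_
          have hiS : (i:ℝ) + 1 ≤ S := by
            rw [hSdef]; exact_mod_cast Nat.succ_le_of_lt (Finset.mem_range.1 hi)
          have hi0 : (0:ℝ) ≤ i := Nat.cast_nonneg i
          have hnum : |(S - 1 - 2 * (i:ℝ)) * (S - 1 - i)| ≤ S * S := by
            rw [abs_mul]
            have h1 : |S - 1 - 2 * (i:ℝ)| ≤ S := abs_le.2 ⟨by linarith, by linarith⟩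
            have h2 : |S - 1 - (i:ℝ)| ≤ S := abs_le.2 ⟨by linarith, by linarith⟩
            exact mul_le_mul h1 h2 (abs_nonneg _) (by linarith)
          have hden : S * (N * N) ≤ 2 * S * N * a i := by
            have h := ha_lb i hi
            simp only [hadef] at h ⊢
            nlinarith [h, hS0, hN0, mul_pos hS0 hN0]
          have hdpos : 0 < 2 * S * N * a i := by
            have := ha_pos i hi; positivity
          rw [abs_div, abs_of_pos hdpos]
          calc |(S - 1 - 2 * (i:ℝ)) * (S - 1 - i)| / (2 * S * N * a i)
              ≤ S * S / (S * (N * N)) :=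
                div_le_div₀ (by positivity) hnum (by positivity) hden
            _ = S / (N * N) := by field_simp
      _ = S * S / (N * N) := by
          rw [Finset.sum_const, Finset.card_range, nsmul_eq_mul, ← hSdef]; ring
  have hEeq : harm n / D - (N / S * harm n - (S - 1) / (2 * S) * harm n)
      = harm n * (1 - c * D) / D := by
    rw [hcdef]; field_simp
  rw [hEeq, abs_div, abs_of_pos hD0, abs_mul, abs_of_nonneg (harm_nonneg n)]
  have h1cd : |1 - c * D| ≤ S * S / (N * N) := (abs_sub_comm (1:ℝ) (c*D) ▸ habs)
  calc harm n * |1 - c * D| / D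
      ≤ harm n * (S * S / (N * N)) / (S / N) :=
        div_le_div₀ (by have := harm_nonneg n; positivity)
          (mul_le_mul_of_nonneg_left h1cd (harm_nonneg n)) (by positivity) hDlb
    _ = S * harm n / N := by field_simp

/-- For fixed `s ≥ 2`, `H_n/(H_n − H_{n−s}) = (n/s)·H_n − ((s−1)/(2s))·H_n + o(1)`. -/
theorem stmt1 (s : ℕ) (hs : 2 ≤ s) :
    Filter.Tendsto (fun n : ℕ =>
        harm n / (harm n - harm (n - s))
          - (((n : ℝ) / s) * harm n - (((s : ℝ) - 1) / (2 * s)) * harm n))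
      Filter.atTop (nhds 0) := by
  have hg : Filter.Tendsto (fun n : ℕ => (s:ℝ) * (1 / n + Real.log n / n))
      Filter.atTop (nhds 0) := by
    have h1 : Filter.Tendsto (fun n : ℕ => 1 / (n:ℝ)) Filter.atTop (nhds 0) :=
      tendsto_one_div_atTop_nhds_zero_nat
    have h2 : Filter.Tendsto (fun n : ℕ => Real.log n / n) Filter.atTop (nhds 0) :=
      (Real.isLittleO_log_id_atTop.tendsto_div_nhds_zero).comp tendsto_natCast_atTop_atTop
    simpa using (h1.add h2).const_mul (s:ℝ)
  apply squeeze_zero_norm' _ hg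
  filter_upwards [eventually_ge_atTop (2*s)] with n hn
  have hN0 : (0:ℝ) < n := by
    have : 0 < n := by omega
    exact_mod_cast this
  rw [Real.norm_eq_abs]
  refine (key_est s n hs hn).trans ?_
  have hh := harm_le n
  have h1 : (s:ℝ) * harm n / n ≤ (s:ℝ) * (1 + Real.log n) / n := by
    gcongr
  have heq : (s:ℝ) * (1 + Real.log n) / n = (s:ℝ) * (1/(n:ℝ) + Real.log n / n) := by
    field_simp
  linarith
end

section
/- Let Y be the number of draws needed to collect all n coupons where each draw is a uniformly random s-subset. Then for any integer i ≥ 0, P(Y ≤ i) ≤ (1 − ((n−s)/n)^i)^n. -/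
open Finset Filter
open scoped Classical

noncomputable section

/-- All tuples of `i` draws, each draw being an `s`-element subset of the `n` coupons.
The drawing process is uniform on this finite set. -/
def draws (n s i : ℕ) : Finset (Fin i → Finset (Fin n)) :=
  Finset.univ.filter (fun f => ∀ j, (f j).card = s)

/-- The probability, under `i` independent uniform `s`-subset draws from `n` coupons,
of the event `p`. -/
def pr (n s i : ℕ) (p : (Fin i → Finset (Fin n)) → Prop) : ℝ :=
  (((draws n s i).filter p).card : ℝ) / ((draws n s i).card : ℝ)

/-- The event that every coupon has appeared in at least one of the draws. -/
def collected {n i : ℕ} (f : Fin i → Finset (Fin n)) : Prop :=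
  ∀ t : Fin n, ∃ j, t ∈ f j

/-- The number of coupons missed by all the draws. -/
def missed {n i : ℕ} (f : Fin i → Finset (Fin n)) : ℕ :=
  (Finset.univ.filter (fun t : Fin n => ∀ j, t ∉ f j)).card

/-- `P(Y ≥ i)`: the probability that the collection is not complete after `i − 1` draws,
where `Y` is the number of draws needed to collect all `n` coupons. -/
def PYge (n s i : ℕ) : ℝ := pr n s (i - 1) (fun f => ¬ collected f)

/-- `P(Y ≤ i)`: the probability that the collection is complete after `i` draws. -/
def PYle (n s i : ℕ) : ℝ := pr n s i (fun f => collected f)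

/-- `P(Y = i)`. -/
def PYeq (n s i : ℕ) : ℝ := PYle n s i - if i = 0 then 0 else PYle n s (i - 1)

/-- `E[Y]`, via the tail-sum formula `E[Y] = ∑_{i≥1} P(Y ≥ i) = ∑_{i≥0} P(Y > i)`. -/
def EY (n s : ℕ) : ℝ := ∑' i : ℕ, pr n s i (fun f => ¬ collected f)

end

noncomputable section CCP

variable {n i : ℕ}

/-- Count of draw-tuples with prescribed subset/cardinality constraints covering `T`. -/
def cov (n i : ℕ) (U T : Finset (Fin n)) (c : Fin i → ℕ) : ℕ :=
  ((Finset.univ : Finset (Fin i → Finset (Fin n))).filter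
    (fun f => (∀ j, f j ⊆ U ∧ (f j).card = c j) ∧ ∀ u ∈ T, ∃ j, u ∈ f j)).card

lemma cov_empty (U : Finset (Fin n)) (c : Fin i → ℕ) :
    cov n i U ∅ c = ∏ j, (U.card).choose (c j) := by
  have h : ((Finset.univ : Finset (Fin i → Finset (Fin n))).filter
      (fun f => (∀ j, f j ⊆ U ∧ (f j).card = c j) ∧ ∀ u ∈ (∅ : Finset (Fin n)), ∃ j, u ∈ f j))
      = Fintype.piFinset (fun j => U.powersetCard (c j)) := by
    ext f
    simp [Fintype.mem_piFinset, Finset.mem_powersetCard, forall_and]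
  rw [cov, h, Fintype.card_piFinset]
  simp

lemma cov_step (U T : Finset (Fin n)) (c : Fin i → ℕ) (j0 : Fin i) :
    cov n i U T c * (U.card - c j0) ≤
      cov n i U T (Function.update c j0 (c j0 + 1)) * (c j0 + 1) := by
  set P := fun (c : Fin i → ℕ) (f : Fin i → Finset (Fin n)) =>
    (∀ j, f j ⊆ U ∧ (f j).card = c j) ∧ ∀ u ∈ T, ∃ j, u ∈ f j with hP
  set A := (Finset.univ : Finset (Fin i → Finset (Fin n))).filter (P c) with hA
  set B := (Finset.univ : Finset (Fin i → Finset (Fin n))).filter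
    (P (Function.update c j0 (c j0 + 1))) with hB
  have hc1 : (A.sigma (fun f => U \ f j0)).card = A.card * (U.card - c j0) := by
    rw [Finset.card_sigma]
    rw [Finset.sum_congr rfl (fun f hf => ?_), Finset.sum_const, smul_eq_mul]
    have hf' := (Finset.mem_filter.1 hf).2
    rw [Finset.card_sdiff_of_subset (hf'.1 j0).1, (hf'.1 j0).2]
  have hc2 : (B.sigma (fun f => f j0)).card = B.card * (c j0 + 1) := by
    rw [Finset.card_sigma]
    rw [Finset.sum_congr rfl (fun f hf => ?_), Finset.sum_const, smul_eq_mul]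
    have hf' := (Finset.mem_filter.1 hf).2
    rw [(hf'.1 j0).2, Function.update_self]
  have e1 : cov n i U T c = A.card := rfl
  have e2 : cov n i U T (Function.update c j0 (c j0 + 1)) = B.card := rfl
  rw [e1, e2, ← hc1, ← hc2]
  apply Finset.card_le_card_of_injOn
    (fun p => ⟨Function.update p.1 j0 (insert p.2 (p.1 j0)), p.2⟩)
  · rintro ⟨f, x⟩ hp
    rw [Finset.mem_coe, Finset.mem_sigma] at hp
    obtain ⟨hfA, hx⟩ := hp
    dsimp only at hfA hx ⊢
    rw [Finset.mem_sdiff] at hx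
    have hf' := (Finset.mem_filter.1 hfA).2
    rw [Finset.mem_coe, Finset.mem_sigma]
    dsimp only
    refine ⟨Finset.mem_filter.2 ⟨Finset.mem_univ _, ⟨fun j => ?_, fun u hu => ?_⟩⟩, by
      simp⟩
    · by_cases hj : j = j0
      · subst hj
        simp only [Function.update_self]
        exact ⟨Finset.insert_subset hx.1 (hf'.1 j).1,
          by rw [Finset.card_insert_of_notMem hx.2, (hf'.1 j).2]⟩
      · simp only [Function.update_of_ne hj]
        exact hf'.1 j
    · obtain ⟨j, hj⟩ := hf'.2 u hu
      refine ⟨j, ?_⟩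
      by_cases hje : j = j0
      · subst hje
        simp only [Function.update_self]
        exact Finset.mem_insert_of_mem hj
      · simp only [Function.update_of_ne hje]
        exact hj
  · rintro ⟨f, x⟩ hp ⟨g, y⟩ hq h
    simp only [Finset.coe_sigma, Set.mem_sigma_iff, Finset.mem_coe, Finset.mem_sdiff] at hp hq
    obtain ⟨hfA, hx⟩ := hp
    obtain ⟨hgA, hy⟩ := hq
    dsimp only at hfA hgA hx hy h
    obtain ⟨h1, h2⟩ := Sigma.mk.inj_iff.1 h
    have hxy : x = y := eq_of_heq h2
    subst hxy
    have h3 : f = g := by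
      funext j
      by_cases hj : j = j0
      · subst hj
        have hupd := congrFun h1 j
        simp only [Function.update_self] at hupd
        calc f j = (insert x (f j)).erase x := (Finset.erase_insert hx.2).symm
        _ = (insert x (g j)).erase x := by rw [hupd]
        _ = g j := Finset.erase_insert hy.2
      · have hupd := congrFun h1 j
        simpa [Function.update_of_ne hj] using hupd
    simp [h3]

lemma cov_le_real (U T : Finset (Fin n)) (s : ℕ) (hs1 : 1 ≤ s) (hsU : s ≤ U.card)
    (S : Finset (Fin i)) :
    (cov n i U T (fun j => if j ∈ S then s - 1 else s) : ℝ) ≤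
      (cov n i U T (fun _ => s) : ℝ) * ((s : ℝ) / ((U.card - s + 1 : ℕ) : ℝ)) ^ S.card := by
  induction S using Finset.induction_on with
  | empty => simp
  | @insert j0 S hj0 ih =>
    set cA : Fin i → ℕ := fun j => if j ∈ insert j0 S then s - 1 else s with hcA
    set cB : Fin i → ℕ := fun j => if j ∈ S then s - 1 else s with hcB
    have hAj0 : cA j0 = s - 1 := by simp [hcA]
    have hupd : Function.update cA j0 (cA j0 + 1) = cB := by
      funext j
      by_cases hj : j = j0
      · subst hj
        simp only [Function.update_self, hAj0, hcB, if_neg hj0]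
        omega
      · simp only [Function.update_of_ne hj, hcA, hcB, Finset.mem_insert]
        by_cases hjS : j ∈ S <;> simp [hjS, hj]
    have key := cov_step U T cA j0
    rw [hupd, hAj0] at key
    have hd : U.card - (s - 1) = U.card - s + 1 := by omega
    have hs' : s - 1 + 1 = s := by omega
    rw [hd, hs'] at key
    have hdpos : (0 : ℝ) < ((U.card - s + 1 : ℕ) : ℝ) := by
      have : 1 ≤ U.card - s + 1 := by omega
      exact_mod_cast Nat.lt_of_lt_of_le Nat.zero_lt_one this
    have keyR : (cov n i U T cA : ℝ) * ((U.card - s + 1 : ℕ) : ℝ) ≤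
        (cov n i U T cB : ℝ) * s := by exact_mod_cast key
    set r : ℝ := (s : ℝ) / ((U.card - s + 1 : ℕ) : ℝ) with hr
    have hrnn : 0 ≤ r := div_nonneg (Nat.cast_nonneg _) hdpos.le
    have step1 : (cov n i U T cA : ℝ) ≤ (cov n i U T cB : ℝ) * r := by
      rw [hr, mul_div_assoc', le_div_iff₀ hdpos]
      exact keyR
    calc (cov n i U T cA : ℝ) ≤ (cov n i U T cB : ℝ) * r := step1
    _ ≤ ((cov n i U T (fun _ => s) : ℝ) * r ^ S.card) * r :=
        mul_le_mul_of_nonneg_right ih hrnn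
    _ = (cov n i U T (fun _ => s) : ℝ) * r ^ (insert j0 S).card := by
        rw [Finset.card_insert_of_notMem hj0, pow_succ]
        ring

lemma cov_decomp (T : Finset (Fin n)) (t : Fin n) (ht : t ∉ T) (s : ℕ) (hs1 : 1 ≤ s) :
    cov n i Finset.univ T (fun _ => s) =
      ∑ S ∈ (Finset.univ : Finset (Fin i)).powerset,
        cov n i (Finset.univ.erase t) T (fun j => if j ∈ S then s - 1 else s) := by
  set A := (Finset.univ : Finset (Fin i → Finset (Fin n))).filter
    (fun f => (∀ j, f j ⊆ Finset.univ ∧ (f j).card = s) ∧ ∀ u ∈ T, ∃ j, u ∈ f j) with hA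
  have hfib : A.card = ∑ S ∈ (Finset.univ : Finset (Fin i)).powerset,
      (A.filter (fun f => (Finset.univ.filter (fun j => t ∈ f j)) = S)).card := by
    apply Finset.card_eq_sum_card_fiberwise
    intro f _
    exact Finset.mem_powerset.2 (Finset.subset_univ _)
  have e1 : cov n i Finset.univ T (fun _ => s) = A.card := rfl
  rw [e1, hfib]
  apply Finset.sum_congr rfl
  intro S hS
  apply Finset.card_nbij' (fun f => fun j => (f j).erase t)
    (fun h => fun j => if j ∈ S then insert t (h j) else h j)
  · intro f hf
    rw [Finset.mem_coe, Finset.mem_filter] at hf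
    obtain ⟨hfA, hkey⟩ := hf
    rw [hA, Finset.mem_filter] at hfA
    obtain ⟨-, hcard, hcov⟩ := hfA
    have hmem : ∀ j, t ∈ f j ↔ j ∈ S := by
      intro j
      rw [← hkey]
      simp
    rw [Finset.mem_coe, Finset.mem_filter]
    refine ⟨Finset.mem_univ _, fun j => ?_, fun u hu => ?_⟩
    · refine ⟨Finset.erase_subset_erase t (Finset.subset_univ _), ?_⟩
      dsimp only
      by_cases hj : j ∈ S
      · rw [Finset.card_erase_of_mem ((hmem j).2 hj), (hcard j).2, if_pos hj]
      · rw [Finset.erase_eq_of_notMem (fun hc => hj ((hmem j).1 hc)), (hcard j).2, if_neg hj]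
    · obtain ⟨j, hj⟩ := hcov u hu
      exact ⟨j, Finset.mem_erase.2 ⟨fun hc => ht (hc ▸ hu), hj⟩⟩
  · intro h hh
    rw [Finset.mem_coe, Finset.mem_filter] at hh
    obtain ⟨-, hcard, hcov⟩ := hh
    have htout : ∀ j, t ∉ h j := by
      intro j hc
      exact (Finset.mem_erase.1 ((hcard j).1 hc)).1 rfl
    rw [Finset.mem_coe, Finset.mem_filter]
    refine ⟨?_, ?_⟩
    · rw [hA, Finset.mem_filter]
      refine ⟨Finset.mem_univ _, fun j => ?_, fun u hu => ?_⟩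
      · dsimp only
        have hc := (hcard j).2
        dsimp only at hc
        by_cases hj : j ∈ S
        · rw [if_pos hj]
          refine ⟨Finset.subset_univ _, ?_⟩
          rw [Finset.card_insert_of_notMem (htout j)]
          rw [if_pos hj] at hc
          clear e1 hfib hA A
          omega
        · rw [if_neg hj]
          refine ⟨Finset.subset_univ _, ?_⟩
          rwa [if_neg hj] at hc
      · obtain ⟨j, hj⟩ := hcov u hu
        refine ⟨j, ?_⟩
        dsimp only
        by_cases hjS : j ∈ S
        · rw [if_pos hjS]; exact Finset.mem_insert_of_mem hj
        · rw [if_neg hjS]; exact hj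
    · ext j
      simp only [Finset.mem_filter, Finset.mem_univ, true_and]
      by_cases hj : j ∈ S
      · simp [if_pos hj, hj]
      · simp [if_neg hj, hj, htout j]
  · intro f hf
    rw [Finset.mem_coe, Finset.mem_filter] at hf
    have hmem : ∀ j, t ∈ f j ↔ j ∈ S := by
      intro j
      rw [← hf.2]
      simp
    funext j
    dsimp only
    by_cases hj : j ∈ S
    · rw [if_pos hj, Finset.insert_erase ((hmem j).2 hj)]
    · rw [if_neg hj, Finset.erase_eq_of_notMem (fun hc => hj ((hmem j).1 hc))]
  · intro h hh
    rw [Finset.mem_coe, Finset.mem_filter] at hh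
    have htout : ∀ j, t ∉ h j := by
      intro j hc
      exact (Finset.mem_erase.1 ((hh.2.1 j).1 hc)).1 rfl
    funext j
    dsimp only
    by_cases hj : j ∈ S
    · rw [if_pos hj, Finset.erase_insert (htout j)]
    · rw [if_neg hj, Finset.erase_eq_of_notMem (htout j)]

lemma key_ineq (T : Finset (Fin n)) (t : Fin n) (ht : t ∉ T) (s : ℕ)
    (hn : 1 ≤ n) (hs1 : 1 ≤ s) (hsn : s ≤ n) :
    (((n : ℝ) - s) / n) ^ i * (cov n i Finset.univ T (fun _ => s) : ℝ) ≤
      (cov n i (Finset.univ.erase t) T (fun _ => s) : ℝ) := by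
  rcases eq_or_lt_of_le hsn with rfl | hlt
  · -- s = n
    rcases Nat.eq_zero_or_pos i with rfl | hi
    · simp only [pow_zero, one_mul]
      have he : cov s 0 Finset.univ T (fun _ => s) =
          cov s 0 (Finset.univ.erase t) T (fun _ => s) := by
        unfold cov
        congr 1
        apply Finset.filter_congr
        intro f _
        simp
      rw [he]
    · rw [sub_self, zero_div, zero_pow (by omega), zero_mul]
      positivity
  · -- s < n
    have hUcard : (Finset.univ.erase t).card = n - 1 := by
      rw [Finset.card_erase_of_mem (Finset.mem_univ t), Finset.card_univ, Fintype.card_fin]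
    have hsU : s ≤ (Finset.univ.erase t).card := by omega
    have hd : (Finset.univ.erase t).card - s + 1 = n - s := by omega
    set M := (cov n i (Finset.univ.erase t) T (fun _ => s) : ℝ) with hM
    have hMnn : (0 : ℝ) ≤ M := Nat.cast_nonneg _
    set r : ℝ := (s : ℝ) / ((n - s : ℕ) : ℝ) with hr
    have hsum : (cov n i Finset.univ T (fun _ => s) : ℝ) ≤ M * (r + 1) ^ i := by
      rw [cov_decomp T t ht s hs1]
      push_cast
      calc ∑ S ∈ (Finset.univ : Finset (Fin i)).powerset,
            (cov n i (Finset.univ.erase t) T (fun j => if j ∈ S then s - 1 else s) : ℝ)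
          ≤ ∑ S ∈ (Finset.univ : Finset (Fin i)).powerset, M * r ^ S.card := by
            apply Finset.sum_le_sum
            intro S hS
            have h := cov_le_real (Finset.univ.erase t) T s hs1 hsU S
            rwa [hd] at h
        _ = M * (r + 1) ^ i := by
            rw [← Finset.mul_sum]
            congr 1
            have hp := Finset.prod_add (fun _ : Fin i => r) (fun _ : Fin i => (1 : ℝ))
              Finset.univ
            simp only [Finset.prod_const, one_pow, mul_one, Finset.card_univ,
              Fintype.card_fin] at hp
            exact hp.symm
    have hn0 : (0 : ℝ) < (n : ℝ) := by exact_mod_cast Nat.lt_of_lt_of_le Nat.zero_lt_one hn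
    have hns : (0 : ℝ) < (n : ℝ) - s := by
      have : (s : ℝ) < n := by exact_mod_cast hlt
      linarith
    have hq1 : (((n : ℝ) - s) / n) * (r + 1) = 1 := by
      rw [hr, Nat.cast_sub hsn]
      field_simp
      ring
    have hqnn : (0 : ℝ) ≤ ((n : ℝ) - s) / n := by positivity
    calc (((n : ℝ) - s) / n) ^ i * (cov n i Finset.univ T (fun _ => s) : ℝ)
        ≤ (((n : ℝ) - s) / n) ^ i * (M * (r + 1) ^ i) :=
          mul_le_mul_of_nonneg_left hsum (pow_nonneg hqnn i)
      _ = ((((n : ℝ) - s) / n) * (r + 1)) ^ i * M := by rw [mul_pow]; ring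
      _ = M := by rw [hq1, one_pow, one_mul]

lemma main_bound (s : ℕ) (hn : 1 ≤ n) (hs1 : 1 ≤ s) (hsn : s ≤ n) (T : Finset (Fin n)) :
    (cov n i Finset.univ T (fun _ => s) : ℝ) ≤
      ((n.choose s : ℝ)) ^ i * (1 - (((n : ℝ) - s) / n) ^ i) ^ T.card := by
  have hn0 : (0 : ℝ) < (n : ℝ) := by exact_mod_cast Nat.lt_of_lt_of_le Nat.zero_lt_one hn
  have hq0 : (0 : ℝ) ≤ ((n : ℝ) - s) / n := by
    apply div_nonneg _ hn0.le
    have : (s : ℝ) ≤ n := by exact_mod_cast hsn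
    linarith
  have hq1 : ((n : ℝ) - s) / n ≤ 1 := by
    rw [div_le_one hn0]
    have : (0 : ℝ) ≤ (s : ℝ) := Nat.cast_nonneg _
    linarith
  have hqi : (((n : ℝ) - s) / n) ^ i ≤ 1 := pow_le_one₀ hq0 hq1
  have hqinn : (0 : ℝ) ≤ (((n : ℝ) - s) / n) ^ i := pow_nonneg hq0 i
  induction T using Finset.induction_on with
  | empty =>
    rw [cov_empty, Finset.prod_const, Finset.card_univ, Fintype.card_fin, Finset.card_univ,
      Fintype.card_fin, Finset.card_empty, pow_zero, mul_one]
    push_cast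
    exact le_refl _
  | @insert t T ht ih =>
    have hpart : cov n i Finset.univ (insert t T) (fun _ => s)
        + cov n i (Finset.univ.erase t) T (fun _ => s)
        = cov n i Finset.univ T (fun _ => s) := by
      unfold cov
      rw [← Finset.card_filter_add_card_filter_not
        (s := (Finset.univ : Finset (Fin i → Finset (Fin n))).filter
          (fun f => (∀ j, f j ⊆ Finset.univ ∧ (f j).card = s) ∧ ∀ u ∈ T, ∃ j, u ∈ f j))
        (p := fun f => ∃ j, t ∈ f j)]
      congr 1
      · rw [Finset.filter_filter]
        congr 1
        apply Finset.filter_congr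
        intro f _
        constructor
        · rintro ⟨hc, hcov⟩
          exact ⟨⟨hc, fun u hu => hcov u (Finset.mem_insert_of_mem hu)⟩,
            hcov t (Finset.mem_insert_self t T)⟩
        · rintro ⟨⟨hc, hcov⟩, hex⟩
          refine ⟨hc, fun u hu => ?_⟩
          rcases Finset.mem_insert.1 hu with rfl | hu
          · exact hex
          · exact hcov u hu
      · rw [Finset.filter_filter]
        congr 1
        apply Finset.filter_congr
        intro f _
        constructor
        · rintro ⟨hc, hcov⟩
          refine ⟨⟨fun j => ⟨Finset.subset_univ _, (hc j).2⟩, hcov⟩, ?_⟩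
          rintro ⟨j, hj⟩
          exact (Finset.mem_erase.1 ((hc j).1 hj)).1 rfl
        · rintro ⟨⟨hc, hcov⟩, hnex⟩
          exact ⟨fun j => ⟨Finset.subset_erase.2
            ⟨Finset.subset_univ _, fun hjt => hnex ⟨j, hjt⟩⟩, (hc j).2⟩, hcov⟩
    have hN : (cov n i Finset.univ (insert t T) (fun _ => s) : ℝ)
        = (cov n i Finset.univ T (fun _ => s) : ℝ)
          - (cov n i (Finset.univ.erase t) T (fun _ => s) : ℝ) := by
      have h2 : ((cov n i Finset.univ (insert t T) (fun _ => s)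
        + cov n i (Finset.univ.erase t) T (fun _ => s) : ℕ) : ℝ)
        = ((cov n i Finset.univ T (fun _ => s) : ℕ) : ℝ) := by rw [hpart]
      push_cast at h2
      linarith
    have hkey := key_ineq (i := i) T t ht s hn hs1 hsn
    have hNnn : (0 : ℝ) ≤ (cov n i Finset.univ T (fun _ => s) : ℝ) := Nat.cast_nonneg _
    calc (cov n i Finset.univ (insert t T) (fun _ => s) : ℝ)
        = (cov n i Finset.univ T (fun _ => s) : ℝ)
          - (cov n i (Finset.univ.erase t) T (fun _ => s) : ℝ) := hN
      _ ≤ (cov n i Finset.univ T (fun _ => s) : ℝ)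
          - (((n : ℝ) - s) / n) ^ i * (cov n i Finset.univ T (fun _ => s) : ℝ) := by
            linarith
      _ = (1 - (((n : ℝ) - s) / n) ^ i) * (cov n i Finset.univ T (fun _ => s) : ℝ) := by ring
      _ ≤ (1 - (((n : ℝ) - s) / n) ^ i)
          * (((n.choose s : ℝ)) ^ i * (1 - (((n : ℝ) - s) / n) ^ i) ^ T.card) :=
            mul_le_mul_of_nonneg_left ih (by linarith)
      _ = ((n.choose s : ℝ)) ^ i * (1 - (((n : ℝ) - s) / n) ^ i) ^ (insert t T).card := by
            rw [Finset.card_insert_of_notMem ht, pow_succ]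
            ring

end CCP

/-- Negative association bound: `P(Y ≤ i) ≤ (1 − ((n−s)/n)^i)^n`. -/
theorem stmt5 (n s i : ℕ) (hn : 1 ≤ n) (hs1 : 1 ≤ s) (hsn : s ≤ n) :
    PYle n s i ≤ (1 - (((n : ℝ) - s) / n) ^ i) ^ n := by
  classical
  have hdraws : (draws n s i).card = (n.choose s) ^ i := by
    have h : draws n s i
        = Fintype.piFinset (fun _ : Fin i => (Finset.univ : Finset (Fin n)).powersetCard s) := by
      ext f
      simp [draws, Fintype.mem_piFinset, Finset.mem_powersetCard]
    rw [h, Fintype.card_piFinset]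
    simp [Finset.card_univ]
  have hfilter : ((draws n s i).filter (fun f => collected f)).card
      = cov n i Finset.univ Finset.univ (fun _ => s) := by
    unfold draws cov
    rw [Finset.filter_filter]
    congr 1
    apply Finset.filter_congr
    intro f _
    simp [collected]
  have hbound := main_bound (n := n) (i := i) s hn hs1 hsn Finset.univ
  rw [Finset.card_univ, Fintype.card_fin] at hbound
  have hpos : (0 : ℝ) < ((draws n s i).card : ℝ) := by
    rw [hdraws]
    exact_mod_cast pow_pos (Nat.choose_pos hsn) i
  rw [PYle, pr, div_le_iff₀ hpos, hfilter, hdraws]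
  push_cast
  push_cast at hbound
  linarith
end

section
/- Let 0 < c < 1 and let g(x) = ∑_{i=1}^∞ (1 − e^{−(1−c)^{i−x−1}} − e^{−(1−c)^{−i−x}}) for x ∈ [0,1). Then lim_{x→1⁻} g(x) = g(0) + 1. -/
/-- `g(x) = ∑_{i=1}^∞ (1 − e^{−(1−c)^{i−x−1}} − e^{−(1−c)^{−i−x}})`. -/
noncomputable def g (c x : ℝ) : ℝ :=
  ∑' i : ℕ, (1 - Real.exp (-(1 - c) ^ (((i : ℝ) + 1) - x - 1))
               - Real.exp (-(1 - c) ^ (-((i : ℝ) + 1) - x)))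

namespace Stmt11Aux

open Real Filter

noncomputable def E (q t : ℝ) : ℝ := Real.exp (-q ^ t)

noncomputable def term (q x : ℝ) (i : ℕ) : ℝ :=
  1 - Real.exp (-q ^ (((i : ℝ) + 1) - x - 1)) - Real.exp (-q ^ (-((i : ℝ) + 1) - x))

lemma term_eq (q x : ℝ) (i : ℕ) :
    term q x i = 1 - E q ((i : ℝ) - x) - E q (-(i : ℝ) - 1 - x) := by
  have h1 : ((i : ℝ) + 1) - x - 1 = (i : ℝ) - x := by ring
  have h2 : -((i : ℝ) + 1) - x = -(i : ℝ) - 1 - x := by ring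
  rw [term, h1, h2]; rfl

lemma g_eq (c x : ℝ) : g c x = ∑' i : ℕ, term (1 - c) x i := rfl

variable {q : ℝ} (hq : 0 < q) (hq1 : q < 1)

include hq hq1

lemma one_sub_E_le {t s : ℝ} (hts : s ≤ t) : 1 - E q t ≤ q ^ s := by
  have h1 : 1 - q ^ t ≤ E q t := by
    have := Real.add_one_le_exp (-q ^ t)
    unfold E; linarith
  have h2 : q ^ t ≤ q ^ s := Real.rpow_le_rpow_of_exponent_ge hq hq1.le hts
  linarith

lemma E_le {t s : ℝ} (hts : t ≤ s) : E q t ≤ (q ^ s)⁻¹ := by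
  have hmono : q ^ s ≤ q ^ t := Real.rpow_le_rpow_of_exponent_ge hq hq1.le hts
  have hpos : 0 < q ^ s := Real.rpow_pos_of_pos hq s
  have h1 : E q t ≤ Real.exp (-q ^ s) := by
    unfold E; exact Real.exp_le_exp.mpr (by linarith)
  have h2 : q ^ s ≤ Real.exp (q ^ s) := by
    have := Real.add_one_le_exp (q ^ s); linarith
  have h3 : Real.exp (-q ^ s) ≤ (q ^ s)⁻¹ := by
    rw [Real.exp_neg]
    exact inv_anti₀ hpos h2
  linarith

lemma E_nonneg (t : ℝ) : 0 ≤ E q t := (Real.exp_pos _).le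

lemma E_le_one (t : ℝ) : E q t ≤ 1 := by
  unfold E
  rw [Real.exp_le_one_iff]
  have := Real.rpow_pos_of_pos hq t
  linarith

/-- bound valid for `x ∈ [0,1]`. -/
lemma term_bound {x : ℝ} (hx0 : 0 ≤ x) (hx1 : x ≤ 1) (i : ℕ) :
    |term q x i| ≤ q ^ i / q + q ^ i * q := by
  rw [term_eq]
  have hb1 : 1 - E q ((i : ℝ) - x) ≤ q ^ ((i : ℝ) - 1) :=
    one_sub_E_le hq hq1 (by linarith)
  have hb2 : E q (-(i : ℝ) - 1 - x) ≤ (q ^ (-((i : ℝ) + 1)))⁻¹ :=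
    E_le hq hq1 (by linarith)
  have he1 : q ^ ((i : ℝ) - 1) = q ^ i / q := by
    rw [Real.rpow_sub hq, Real.rpow_natCast, Real.rpow_one]
  have he2 : (q ^ (-((i : ℝ) + 1)))⁻¹ = q ^ i * q := by
    rw [Real.rpow_neg hq.le, inv_inv, Real.rpow_add hq, Real.rpow_natCast, Real.rpow_one]
  rw [he1] at hb1
  rw [he2] at hb2
  have hA1 : E q ((i : ℝ) - x) ≤ 1 := E_le_one hq hq1 _
  have hA0 : 0 ≤ E q ((i : ℝ) - x) := E_nonneg hq hq1 _
  have hB0 : 0 ≤ E q (-(i : ℝ) - 1 - x) := E_nonneg hq hq1 _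
  rw [abs_le]
  constructor <;> nlinarith

lemma summable_bound : Summable (fun i : ℕ => q ^ i / q + q ^ i * q) := by
  have h : Summable (fun i : ℕ => q ^ i) := summable_geometric_of_lt_one hq.le hq1
  exact ((h.div_const q).add (h.mul_right q))

lemma summable_term {x : ℝ} (hx0 : 0 ≤ x) (hx1 : x ≤ 1) : Summable (term q x) := by
  refine Summable.of_norm_bounded (summable_bound hq hq1) ?_
  intro i
  simpa [Real.norm_eq_abs] using term_bound hq hq1 hx0 hx1 i

noncomputable def φ (q : ℝ) (n : ℕ) : ℝ := E q ((n : ℝ) - 1) - E q (-(n : ℝ) - 1)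

omit hq hq1 in
lemma term_sub (i : ℕ) : term q 1 i - term q 0 i = φ q (i + 1) - φ q i := by
  rw [term_eq, term_eq, φ, φ]
  have h1 : (i : ℝ) - 0 = (i : ℝ) := by ring
  have h2 : -(i : ℝ) - 1 - 0 = -(i : ℝ) - 1 := by ring
  have h3 : ((i + 1 : ℕ) : ℝ) - 1 = (i : ℝ) := by push_cast; ring
  have h4 : -((i + 1 : ℕ) : ℝ) - 1 = -(i : ℝ) - 1 - 1 := by push_cast; ring
  rw [h1, h2, h3, h4]
  ring

lemma sum_shift (N : ℕ) :
    ∑ i ∈ Finset.range N, term q 1 i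
      = (∑ i ∈ Finset.range N, term q 0 i) + φ q N := by
  have h : ∑ i ∈ Finset.range N, (term q 1 i - term q 0 i) = φ q N - φ q 0 := by
    have := Finset.sum_range_sub (φ q) N
    rw [← this]
    exact Finset.sum_congr rfl fun i _ => term_sub i
  have hφ0 : φ q 0 = 0 := by
    simp [φ]
  rw [Finset.sum_sub_distrib, hφ0] at h
  linarith

lemma tendsto_phi : Tendsto (φ q) atTop (nhds 1) := by
  have h1 : Tendsto (fun n : ℕ => q ^ ((n : ℝ) - 1)) atTop (nhds 0) := by
    have : ∀ n : ℕ, q ^ ((n : ℝ) - 1) = q ^ n / q := fun n => by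
      rw [Real.rpow_sub hq, Real.rpow_natCast, Real.rpow_one]
    simp only [this]
    have := tendsto_pow_atTop_nhds_zero_of_lt_one hq.le hq1
    simpa using this.div_const q
  have hE1 : Tendsto (fun n : ℕ => E q ((n : ℝ) - 1)) atTop (nhds 1) := by
    have h1' : Tendsto (fun n : ℕ => -q ^ ((n : ℝ) - 1)) atTop (nhds 0) := by
      simpa using h1.neg
    have := (Real.continuous_exp.tendsto 0).comp h1'
    simpa [E, Function.comp_def] using this
  have h2 : Tendsto (fun n : ℕ => q ^ (-(n : ℝ) - 1)) atTop atTop := by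
    have heq : ∀ n : ℕ, q ^ (-(n : ℝ) - 1) = (q⁻¹) ^ (n + 1) := fun n => by
      rw [show -(n : ℝ) - 1 = -(((n + 1 : ℕ) : ℝ)) by push_cast; ring,
        Real.rpow_neg hq.le, Real.rpow_natCast, ← inv_pow]
    simp only [heq]
    have hq' : 1 < q⁻¹ := (one_lt_inv₀ hq).mpr hq1
    exact (tendsto_pow_atTop_atTop_of_one_lt hq').comp (tendsto_add_atTop_nat 1)
  have hE2 : Tendsto (fun n : ℕ => E q (-(n : ℝ) - 1)) atTop (nhds 0) := by
    have := Real.tendsto_exp_neg_atTop_nhds_zero.comp h2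
    simpa [E, Function.comp_def] using this
  have := hE1.sub hE2
  rw [sub_zero] at this
  exact this

lemma tsum_one : ∑' i, term q 1 i = (∑' i, term q 0 i) + 1 := by
  have hs1 : Summable (term q 1) := summable_term hq hq1 zero_le_one le_rfl
  have hs0 : Summable (term q 0) := summable_term hq hq1 le_rfl zero_le_one
  have T1 : Tendsto (fun N => ∑ i ∈ Finset.range N, term q 1 i) atTop
      (nhds (∑' i, term q 1 i)) := hs1.hasSum.tendsto_sum_nat
  have T2 : Tendsto (fun N => (∑ i ∈ Finset.range N, term q 0 i) + φ q N) atTop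
      (nhds ((∑' i, term q 0 i) + 1)) :=
    hs0.hasSum.tendsto_sum_nat.add (tendsto_phi hq hq1)
  have heq : (fun N => ∑ i ∈ Finset.range N, term q 1 i)
      = fun N => (∑ i ∈ Finset.range N, term q 0 i) + φ q N :=
    funext fun N => sum_shift hq hq1 N
  rw [heq] at T1
  exact tendsto_nhds_unique T1 T2

lemma continuous_term (i : ℕ) : Continuous (fun x => term q x i) := by
  have hb : Continuous (fun t : ℝ => q ^ t) :=
    continuous_iff_continuousAt.mpr fun t => Real.continuousAt_const_rpow hq.ne'
  unfold term
  fun_prop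

lemma continuous_clamped :
    Continuous (fun x : ℝ => ∑' i : ℕ, term q (max 0 (min x 1)) i) := by
  have hclamp : Continuous (fun x : ℝ => max 0 (min x 1)) := by fun_prop
  refine continuous_tsum (fun i => (continuous_term hq hq1 i).comp hclamp)
    (summable_bound hq hq1) (fun i x => ?_)
  have h0 : 0 ≤ max 0 (min x 1) := le_max_left _ _
  have h1 : max 0 (min x 1) ≤ 1 := max_le (by norm_num) (min_le_right _ _)
  simpa [Real.norm_eq_abs] using term_bound hq hq1 h0 h1 i

end Stmt11Aux

/-- `lim_{x→1⁻} g(x) = g(0) + 1`. -/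
theorem stmt11 (c : ℝ) (hc : 0 < c) (hc1 : c < 1) :
    Filter.Tendsto (g c) (nhdsWithin 1 (Set.Iio 1)) (nhds (g c 0 + 1)) := by
  open Stmt11Aux Filter in
  have hq : 0 < 1 - c := by linarith
  have hq1 : 1 - c < 1 := by linarith
  set G : ℝ → ℝ := fun x => ∑' i : ℕ, term (1 - c) (max 0 (min x 1)) i with hG
  have hGc : Continuous G := continuous_clamped hq hq1
  have hG1 : G 1 = g c 0 + 1 := by
    have : max (0:ℝ) (min 1 1) = 1 := by norm_num
    rw [hG]
    simp only [this]
    rw [tsum_one hq hq1, g_eq]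
  have hT : Tendsto G (nhdsWithin 1 (Set.Iio 1)) (nhds (g c 0 + 1)) := by
    rw [← hG1]
    exact (hGc.tendsto 1).mono_left nhdsWithin_le_nhds
  refine hT.congr' ?_
  have hmem : Set.Ioo (0:ℝ) 1 ∈ nhdsWithin 1 (Set.Iio 1) := by
    rw [mem_nhdsWithin]
    exact ⟨Set.Ioi 0, isOpen_Ioi, by norm_num, fun x hx => ⟨hx.1, hx.2⟩⟩
  filter_upwards [hmem] with x hx
  have h1 : min x 1 = x := min_eq_left hx.2.le
  have h2 : max 0 x = x := max_eq_right hx.1.le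
  rw [hG]
  simp only [h1, h2]
  rw [g_eq]
end

section
/- Let t ≥ 2, λ > 0, s(n) = n − ⌈λ n^{(t−1)/t}⌉, and let X_t be the number of coupons missed after t independent uniform s(n)-subset draws from n coupons. Then X_t converges in distribution to a Poisson random variable with mean λ^t as n → ∞. -/
open Finset Filter
open scoped Classical

lemma card_draws (n s i : ℕ) : (draws n s i).card = (n.choose s) ^ i := by
  have : draws n s i = Fintype.piFinset (fun _ : Fin i => Finset.powersetCard s (Finset.univ : Finset (Fin n))) := by
    ext f
    simp [draws, Fintype.mem_piFinset, Finset.mem_powersetCard_univ]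
  rw [this, Fintype.card_piFinset]
  simp [Finset.card_powersetCard]

lemma sum_choose_missed (n s i a : ℕ) :
    ∑ f ∈ draws n s i, (missed f).choose a = (n.choose a) * ((n - a).choose s) ^ i := by
  have h1 : ∀ f : Fin i → Finset (Fin n), (missed f).choose a
      = ((Finset.powersetCard a (Finset.univ : Finset (Fin n))).filter
          (fun A => A ⊆ Finset.univ.filter (fun t : Fin n => ∀ j, t ∉ f j))).card := by
    intro f
    have : (Finset.powersetCard a (Finset.univ : Finset (Fin n))).filter
          (fun A => A ⊆ Finset.univ.filter (fun t : Fin n => ∀ j, t ∉ f j))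
        = Finset.powersetCard a (Finset.univ.filter (fun t : Fin n => ∀ j, t ∉ f j)) := by
      ext A
      simp only [Finset.mem_filter, Finset.mem_powersetCard_univ, Finset.mem_powersetCard]
      constructor
      · rintro ⟨⟨_, h1⟩, h2⟩; exact ⟨h2, h1⟩
      · rintro ⟨h1, h2⟩; exact ⟨⟨Finset.subset_univ A, h2⟩, h1⟩
    rw [this, Finset.card_powersetCard, missed]
  simp_rw [h1, Finset.card_filter, Finset.sum_comm (s := draws n s i)]
  have h2 : ∀ A ∈ Finset.powersetCard a (Finset.univ : Finset (Fin n)),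
      (∑ f ∈ draws n s i, if A ⊆ Finset.univ.filter (fun t : Fin n => ∀ j, t ∉ f j) then 1 else 0)
        = ((n - a).choose s) ^ i := by
    intro A hA
    rw [Finset.mem_powersetCard_univ] at hA
    rw [← Finset.card_filter]
    have : (draws n s i).filter (fun f => A ⊆ Finset.univ.filter (fun t : Fin n => ∀ j, t ∉ f j))
        = Fintype.piFinset (fun _ : Fin i => Finset.powersetCard s Aᶜ) := by
      ext f
      simp only [Finset.mem_filter, draws, Finset.mem_univ, true_and,
        Fintype.mem_piFinset, Finset.mem_powersetCard, Finset.subset_iff, Finset.mem_compl,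
        Finset.mem_filter]
      constructor
      · rintro ⟨hc, hsub⟩ j
        exact ⟨fun x hx hxA => hsub hxA j hx, hc j⟩
      · rintro h
        exact ⟨fun j => (h j).2, fun x hxA j hx => (h j).1 hx hxA⟩
    rw [this, Fintype.card_piFinset]
    have : Aᶜ.card = n - a := by
      rw [Finset.card_compl, hA, Fintype.card_fin]
    simp [Finset.card_powersetCard, this]
  rw [Finset.sum_congr rfl h2, Finset.sum_const, Finset.card_powersetCard]
  simp [mul_comm]
lemma alt_sum_choose (y J : ℕ) (hy : 1 ≤ y) :
    ∑ j ∈ range (J + 1), (-1 : ℝ) ^ j * (y.choose j) = (-1) ^ J * ((y - 1).choose J) := by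
  induction J with
  | zero => simp
  | succ J ih =>
    rw [Finset.sum_range_succ, ih]
    have hy' : y = (y - 1) + 1 := (Nat.succ_pred_eq_of_pos hy).symm
    have : y.choose (J + 1) = (y - 1).choose J + (y - 1).choose (J + 1) := by
      conv_lhs => rw [hy']
      exact Nat.choose_succ_succ _ _
    rw [this]
    push_cast
    ring

lemma choose_prod_eq (x k j : ℕ) :
    (k + j).choose j * x.choose (k + j) = x.choose k * ((x - k).choose j) := by
  rcases le_or_gt (k + j) x with hle | hlt
  · have h := Nat.choose_mul (n := x) (k := k + j) (s := k) (Nat.le_add_right _ _)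
    rw [Nat.choose_symm_add] at h
    rw [Nat.add_sub_cancel_left] at h
    rw [mul_comm, ← h, mul_comm]
  · have h1 : x.choose (k + j) = 0 := Nat.choose_eq_zero_of_lt hlt
    rw [h1, mul_zero]
    rcases le_or_gt k x with hkx | hkx
    · have h2 : (x - k).choose j = 0 := Nat.choose_eq_zero_of_lt (by omega)
      rw [h2, mul_zero]
    · have h2 : x.choose k = 0 := Nat.choose_eq_zero_of_lt hkx
      rw [h2, zero_mul]

lemma trunc_bound (k J x : ℕ) :
    |(if x = k then (1 : ℝ) else 0)
        - ∑ j ∈ range (J + 1), (-1 : ℝ) ^ j * ((k + j).choose j) * (x.choose (k + j))|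
      ≤ ((k + (J + 1)).choose (J + 1)) * (x.choose (k + (J + 1))) := by
  rcases lt_trichotomy x k with h | h | h
  · have hz : ∀ j, x.choose (k + j) = 0 := fun j =>
      Nat.choose_eq_zero_of_lt (lt_of_lt_of_le h (Nat.le_add_right _ _))
    simp [hz, Nat.ne_of_lt h]
  · subst h
    have hsum : ∑ j ∈ range (J + 1), (-1 : ℝ) ^ j * ((x + j).choose j) * (x.choose (x + j)) = 1 := by
      rw [Finset.sum_eq_single 0]
      · simp
      · intro j hj hj0
        have : x < x + j := by omega
        simp [Nat.choose_eq_zero_of_lt this]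
      · simp
    rw [hsum]
    simp [abs_nonneg, mul_nonneg, Nat.cast_nonneg]
  · -- x > k
    have hxk : 1 ≤ x - k := by omega
    have hterm : ∀ j ∈ range (J + 1), (-1 : ℝ) ^ j * ((k + j).choose j) * (x.choose (k + j))
        = (x.choose k : ℝ) * ((-1) ^ j * ((x - k).choose j)) := by
      intro j _
      have := congrArg (Nat.cast : ℕ → ℝ) (choose_prod_eq x k j)
      push_cast at this
      rw [mul_assoc, this]; ring
    rw [Finset.sum_congr rfl hterm, ← Finset.mul_sum, alt_sum_choose _ _ hxk,
      if_neg (by omega), zero_sub, abs_neg, abs_mul, abs_mul]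
    rw [abs_pow, abs_neg, abs_one, one_pow, one_mul, Nat.abs_cast, Nat.abs_cast]
    have hnat : x.choose k * ((x - k - 1).choose J) ≤ (k + (J + 1)).choose (J + 1) * (x.choose (k + (J + 1))) := by
      have h1 : (x - k - 1).choose J ≤ (x - k).choose (J + 1) := by
        have : (x - k).choose (J + 1) = (x - k - 1).choose J + (x - k - 1).choose (J + 1) := by
          conv_lhs => rw [(Nat.succ_pred_eq_of_pos hxk).symm]
          exact Nat.choose_succ_succ _ _
        omega
      calc x.choose k * ((x - k - 1).choose J) ≤ x.choose k * ((x - k).choose (J + 1)) :=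
            Nat.mul_le_mul_left _ h1
        _ = (k + (J + 1)).choose (J + 1) * (x.choose (k + (J + 1))) :=
            (choose_prod_eq x k (J + 1)).symm
    calc (x.choose k : ℝ) * ((x - k - 1).choose J)
        = ((x.choose k * ((x - k - 1).choose J) : ℕ) : ℝ) := by push_cast; ring
      _ ≤ _ := by exact_mod_cast hnat

lemma key_ineq_s12 (n s i k J : ℕ) :
    |(((draws n s i).filter (fun f => missed f = k)).card : ℝ)
        - ∑ j ∈ range (J + 1), (-1 : ℝ) ^ j * ((k + j).choose j)
            * ((n.choose (k + j)) * (((n - (k + j)).choose s : ℕ) ^ i : ℕ))|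
      ≤ ((k + (J + 1)).choose (J + 1))
          * ((n.choose (k + (J + 1))) * (((n - (k + (J + 1))).choose s : ℕ) ^ i : ℕ)) := by
  have hcard : (((draws n s i).filter (fun f => missed f = k)).card : ℝ)
      = ∑ f ∈ draws n s i, (if missed f = k then (1 : ℝ) else 0) := by
    rw [Finset.card_filter]
    push_cast
    rfl
  have hmom : ∀ a : ℕ, ((n.choose a : ℝ) * (((n - a).choose s : ℕ) ^ i : ℕ))
      = ∑ f ∈ draws n s i, ((missed f).choose a : ℝ) := by
    intro a
    have := congrArg (Nat.cast : ℕ → ℝ) (sum_choose_missed n s i a)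
    push_cast at this
    push_cast
    rw [← this]
  calc |(((draws n s i).filter (fun f => missed f = k)).card : ℝ)
        - ∑ j ∈ range (J + 1), (-1 : ℝ) ^ j * ((k + j).choose j)
            * ((n.choose (k + j)) * (((n - (k + j)).choose s : ℕ) ^ i : ℕ))|
      = |∑ f ∈ draws n s i, ((if missed f = k then (1 : ℝ) else 0)
          - ∑ j ∈ range (J + 1), (-1 : ℝ) ^ j * ((k + j).choose j) * ((missed f).choose (k + j)))| := by
        rw [Finset.sum_sub_distrib, hcard]
        congr 1
        congr 1
        rw [Finset.sum_comm]
        refine Finset.sum_congr rfl fun j _ => ?_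
        rw [mul_assoc, hmom (k + j), Finset.mul_sum, Finset.mul_sum]
        exact Finset.sum_congr rfl fun f _ => by ring
    _ ≤ ∑ f ∈ draws n s i, |(if missed f = k then (1 : ℝ) else 0)
          - ∑ j ∈ range (J + 1), (-1 : ℝ) ^ j * ((k + j).choose j) * ((missed f).choose (k + j))| :=
        Finset.abs_sum_le_sum_abs _ _
    _ ≤ ∑ f ∈ draws n s i, ((k + (J + 1)).choose (J + 1) : ℝ) * ((missed f).choose (k + (J + 1))) :=
        Finset.sum_le_sum fun f _ => trunc_bound k J (missed f)
    _ = ((k + (J + 1)).choose (J + 1)) * ((n.choose (k + (J + 1)))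
          * (((n - (k + (J + 1))).choose s : ℕ) ^ i : ℕ)) := by
        rw [← Finset.mul_sum, ← hmom]

lemma choose_desc_id (n m a : ℕ) (ham : a ≤ m) (hmn : m ≤ n) :
    (n - a).choose (n - m) * n.descFactorial a = n.choose (n - m) * m.descFactorial a := by
  induction a with
  | zero => simp
  | succ a ih =>
    have ham' : a ≤ m := by omega
    have key : (n - (a + 1)).choose (n - m) * (n - a) = (n - a).choose (n - m) * (m - a) := by
      have hy : 1 ≤ n - a := by omega
      have h1 : (n - a) * (n - (a + 1)).choose (n - m) = (n - a).choose (n - m + 1) * (n - m + 1) := by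
        have := Nat.add_one_mul_choose_eq (n - (a + 1)) (n - m)
        have he : n - (a + 1) + 1 = n - a := by omega
        simp only [Nat.succ_eq_add_one, he] at this
        exact this
      have h2 : (n - a).choose (n - m + 1) * (n - m + 1) = (n - a).choose (n - m) * (n - a - (n - m)) :=
        Nat.choose_succ_right_eq _ _
      have he2 : n - a - (n - m) = m - a := by omega
      rw [mul_comm ((n - (a+1)).choose (n - m)) (n - a), h1, h2, he2]
    rw [Nat.descFactorial_succ, Nat.descFactorial_succ, ← mul_assoc, ← mul_assoc, key,
      mul_comm ((n-a).choose (n-m)) (m - a), mul_assoc, ih ham', mul_comm (m - a), mul_assoc]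
    ring

section
variable (t : ℕ) (lam : ℝ)

lemma aux_q (ht : 2 ≤ t) (hlam : 0 < lam) :
    Tendsto (fun n : ℕ => (⌈lam * (n : ℝ) ^ (((t : ℝ) - 1) / (t : ℝ))⌉₊ : ℝ) / (n : ℝ) ^ (((t : ℝ) - 1) / (t : ℝ)))
      atTop (nhds lam) := by
  set α : ℝ := ((t : ℝ) - 1) / (t : ℝ) with hαdef
  have htR : (0 : ℝ) < t := by positivity
  have hα : 0 < α := by
    apply div_pos _ htR
    have : (2 : ℝ) ≤ t := by exact_mod_cast ht
    linarith
  have hupper : Tendsto (fun n : ℕ => lam + ((n : ℝ)) ^ (-α)) atTop (nhds (lam + 0)) :=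
    tendsto_const_nhds.add ((tendsto_rpow_neg_atTop hα).comp tendsto_natCast_atTop_atTop)
  rw [add_zero] at hupper
  apply tendsto_of_tendsto_of_tendsto_of_le_of_le' tendsto_const_nhds hupper
  · filter_upwards [eventually_ge_atTop 1] with n hn
    have hnp : (0 : ℝ) < (n : ℝ) ^ α := by
      apply Real.rpow_pos_of_pos
      exact_mod_cast hn
    rw [le_div_iff₀ hnp]
    calc lam * (n : ℝ) ^ α ≤ ⌈lam * (n : ℝ) ^ α⌉₊ := Nat.le_ceil _
      _ = _ := rfl
  · filter_upwards [eventually_ge_atTop 1] with n hn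
    have hn0 : (0 : ℝ) < (n : ℝ) := by exact_mod_cast hn
    have hnp : (0 : ℝ) < (n : ℝ) ^ α := Real.rpow_pos_of_pos hn0 _
    rw [div_le_iff₀ hnp]
    have h1 : (⌈lam * (n : ℝ) ^ α⌉₊ : ℝ) < lam * (n : ℝ) ^ α + 1 :=
      Nat.ceil_lt_add_one (by positivity)
    have h2 : (lam + (n : ℝ) ^ (-α)) * (n : ℝ) ^ α = lam * (n : ℝ) ^ α + 1 := by
      rw [add_mul, ← Real.rpow_add hn0]
      simp
    rw [h2]
    exact h1.le

lemma aux_mtop (ht : 2 ≤ t) (hlam : 0 < lam) :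
    Tendsto (fun n : ℕ => (⌈lam * (n : ℝ) ^ (((t : ℝ) - 1) / (t : ℝ))⌉₊ : ℕ)) atTop atTop := by
  set α : ℝ := ((t : ℝ) - 1) / (t : ℝ) with hαdef
  have htR : (0 : ℝ) < t := by positivity
  have hα : 0 < α := by
    apply div_pos _ htR
    have : (2 : ℝ) ≤ t := by exact_mod_cast ht
    linarith
  rw [← tendsto_natCast_atTop_iff (R := ℝ)]
  apply tendsto_atTop_mono' _ _ (Tendsto.const_mul_atTop hlam ((tendsto_rpow_atTop hα).comp tendsto_natCast_atTop_atTop))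
  filter_upwards with n
  exact Nat.le_ceil _

lemma aux_mle (ht : 2 ≤ t) (hlam : 0 < lam) :
    ∀ᶠ n : ℕ in atTop, (⌈lam * (n : ℝ) ^ (((t : ℝ) - 1) / (t : ℝ))⌉₊ : ℕ) ≤ n := by
  set α : ℝ := ((t : ℝ) - 1) / (t : ℝ) with hαdef
  have htR : (0 : ℝ) < t := by positivity
  have ht2 : (2 : ℝ) ≤ t := by exact_mod_cast ht
  have hα1 : α < 1 := by
    rw [div_lt_one htR]; linarith
  have hα : 0 < α := by
    apply div_pos _ htR; linarith
  have h0 : Tendsto (fun x : ℝ => lam * x ^ (α - 1) + x⁻¹) atTop (nhds 0) := by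
    have h1 : Tendsto (fun x : ℝ => x ^ (α - 1)) atTop (nhds 0) := by
      have := tendsto_rpow_neg_atTop (y := 1 - α) (by linarith)
      simpa [neg_sub] using this
    have := (h1.const_mul lam).add tendsto_inv_atTop_zero
    simpa using this
  have h2 : ∀ᶠ x : ℝ in atTop, lam * x ^ (α - 1) + x⁻¹ < 1 :=
    (h0.eventually (eventually_lt_nhds (by norm_num : (0:ℝ) < 1)))
  have h3 : ∀ᶠ n : ℕ in atTop, lam * (n:ℝ) ^ (α - 1) + (n:ℝ)⁻¹ < 1 :=
    tendsto_natCast_atTop_atTop.eventually h2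
  filter_upwards [h3, eventually_ge_atTop 1] with n hn hn1
  have hn0 : (0 : ℝ) < (n : ℝ) := by exact_mod_cast hn1
  have key : lam * (n : ℝ) ^ α + 1 ≤ (n : ℝ) := by
    have : (lam * (n:ℝ) ^ α + 1) / n = lam * (n:ℝ) ^ (α - 1) + (n:ℝ)⁻¹ := by
      rw [add_div, mul_div_assoc, Real.rpow_sub hn0]
      simp [Real.rpow_one, div_eq_mul_inv]
    have hlt : (lam * (n:ℝ) ^ α + 1) / n < 1 := by rw [this]; exact hn
    have := (div_lt_one hn0).mp hlt
    linarith
  have : (⌈lam * (n : ℝ) ^ α⌉₊ : ℝ) ≤ (n : ℝ) := by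
    have h1 : (⌈lam * (n : ℝ) ^ α⌉₊ : ℝ) < lam * (n : ℝ) ^ α + 1 :=
      Nat.ceil_lt_add_one (by positivity)
    linarith
  exact_mod_cast this

end

section
variable (t : ℕ) (lam : ℝ)

-- factor limit
lemma aux_factor (ht : 2 ≤ t) (hlam : 0 < lam) (i : ℕ)
    (hq : Tendsto (fun n : ℕ => (⌈lam * (n : ℝ) ^ (((t : ℝ) - 1) / (t : ℝ))⌉₊ : ℝ) / (n : ℝ) ^ (((t : ℝ) - 1) / (t : ℝ)))
      atTop (nhds lam)) :
    Tendsto (fun n : ℕ =>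
        ((⌈lam * (n : ℝ) ^ (((t : ℝ) - 1) / (t : ℝ))⌉₊ : ℝ) - i) ^ t / ((n : ℝ) - i) ^ (t - 1))
      atTop (nhds (lam ^ t)) := by
  set α : ℝ := ((t : ℝ) - 1) / (t : ℝ) with hαdef
  set m : ℕ → ℕ := fun n => ⌈lam * (n : ℝ) ^ α⌉₊ with hmdef
  have htR : (0 : ℝ) < t := by positivity
  have hα : 0 < α := by
    apply div_pos _ htR
    have : (2 : ℝ) ≤ t := by exact_mod_cast ht
    linarith
  have hαt : α * t = (t : ℝ) - 1 := div_mul_cancel₀ _ (ne_of_gt htR)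
  -- numerator limit
  have hnum : Tendsto (fun n : ℕ => (((m n : ℝ) - i) / (n : ℝ) ^ α) ^ t) atTop (nhds (lam ^ t)) := by
    apply Tendsto.pow
    have hi : Tendsto (fun n : ℕ => (i : ℝ) / (n : ℝ) ^ α) atTop (nhds 0) := by
      have := (tendsto_rpow_neg_atTop hα).comp (tendsto_natCast_atTop_atTop (R := ℝ))
      have h2 := this.const_mul (i : ℝ)
      rw [mul_zero] at h2
      apply h2.congr'
      filter_upwards [eventually_ge_atTop 1] with n hn
      have hn0 : (0 : ℝ) < (n : ℝ) := by exact_mod_cast hn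
      simp only [Function.comp]
      rw [Real.rpow_neg hn0.le, div_eq_mul_inv]
    have := hq.sub hi
    rw [sub_zero] at this
    apply this.congr
    intro n
    rw [div_sub_div_same]
  -- denominator limit
  have hden : Tendsto (fun n : ℕ => (((n : ℝ) - i) / (n : ℝ)) ^ (t - 1)) atTop (nhds 1) := by
    have h1 : Tendsto (fun n : ℕ => ((n : ℝ) - i) / (n : ℝ)) atTop (nhds 1) := by
      have hi : Tendsto (fun n : ℕ => (i : ℝ) / (n : ℝ)) atTop (nhds 0) :=
        tendsto_const_nhds.div_atTop (tendsto_natCast_atTop_atTop (R := ℝ))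
      have := (tendsto_const_nhds (x := (1:ℝ)) (f := atTop (α := ℕ))).sub hi
      rw [sub_zero] at this
      apply this.congr'
      filter_upwards [eventually_ge_atTop 1] with n hn
      have hn0 : (0 : ℝ) < (n : ℝ) := by exact_mod_cast hn
      field_simp
    have := h1.pow (t - 1)
    rwa [one_pow] at this
  have := hnum.div hden one_ne_zero
  rw [div_one] at this
  apply this.congr'
  filter_upwards [eventually_ge_atTop (i + 1)] with n hn
  have hn0 : (0 : ℝ) < (n : ℝ) := by
    have : (1 : ℕ) ≤ n := by omega
    exact_mod_cast Nat.lt_of_lt_of_le Nat.zero_lt_one this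
  have hnα : (0 : ℝ) < (n : ℝ) ^ α := Real.rpow_pos_of_pos hn0 _
  have hni : (0 : ℝ) < (n : ℝ) - i := by
    have : (i : ℝ) + 1 ≤ (n : ℝ) := by exact_mod_cast hn
    linarith
  have hkey : ((n : ℝ) ^ α) ^ t = (n : ℝ) ^ (t - 1) := by
    rw [← Real.rpow_natCast ((n:ℝ) ^ α) t, ← Real.rpow_mul hn0.le, hαt,
      ← Real.rpow_natCast (n : ℝ) (t - 1)]
    congr 1
    have : (1 : ℕ) ≤ t := by omega
    push_cast [Nat.cast_sub this]
    ring
  simp only [Pi.div_apply]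
  rw [div_pow, div_pow, hkey]
  rw [div_div_div_comm, div_self (by positivity : ((n:ℝ) ^ (t-1)) ≠ 0), div_one]
lemma b_eventual_formula (htpos : 0 < t) (a : ℕ) {m : ℕ → ℕ}
    (hev : ∀ᶠ n : ℕ in atTop, a ≤ m n ∧ m n ≤ n) :
    ∀ᶠ n : ℕ in atTop,
      (n.choose a : ℝ) * (((n - a).choose (n - m n) : ℕ) : ℝ) ^ t
          / (((n.choose (n - m n) : ℕ) : ℝ)) ^ t
        = (1 / (a.factorial : ℝ)) *
            ∏ i ∈ range a, (((m n : ℝ) - i) ^ t / ((n : ℝ) - i) ^ (t - 1)) := by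
  filter_upwards [hev, eventually_ge_atTop 1] with n hn hn1
  obtain ⟨ham, hmn⟩ := hn
  have han : a ≤ n := le_trans ham hmn
  have hsn : n - m n ≤ n := Nat.sub_le _ _
  have hC : (0:ℝ) < (n.choose (n - m n) : ℝ) := by exact_mod_cast Nat.choose_pos hsn
  have hD : (0:ℝ) < (n.descFactorial a : ℝ) := by
    have : 0 < n.descFactorial a := Nat.pos_of_ne_zero (by
      rw [Ne, Nat.descFactorial_eq_zero_iff_lt]; omega)
    exact_mod_cast this
  -- ratio identity
  have hid : (((n - a).choose (n - m n) : ℕ) : ℝ) / (n.choose (n - m n) : ℝ)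
      = ((m n).descFactorial a : ℝ) / (n.descFactorial a : ℝ) := by
    have := congrArg (Nat.cast : ℕ → ℝ) (choose_desc_id n (m n) a ham hmn)
    push_cast at this
    rw [div_eq_div_iff (ne_of_gt hC) (ne_of_gt hD)]
    linarith [this]
  have hchoose : (n.choose a : ℝ) = (n.descFactorial a : ℝ) / (a.factorial : ℝ) := by
    have := congrArg (Nat.cast : ℕ → ℝ) (Nat.descFactorial_eq_factorial_mul_choose n a)
    push_cast at this
    rw [eq_div_iff (by exact_mod_cast a.factorial_ne_zero)]
    linarith [this]
  have lhs_eq : (n.choose a : ℝ) * (((n - a).choose (n - m n) : ℕ) : ℝ) ^ t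
          / (((n.choose (n - m n) : ℕ) : ℝ)) ^ t
      = (1 / (a.factorial : ℝ)) * (((m n).descFactorial a : ℝ) ^ t / ((n.descFactorial a : ℝ)) ^ (t - 1)) := by
    rw [hchoose]
    have h1 : (((n - a).choose (n - m n) : ℕ) : ℝ) ^ t / (((n.choose (n - m n) : ℕ) : ℝ)) ^ t
        = (((m n).descFactorial a : ℝ) / (n.descFactorial a : ℝ)) ^ t := by
      rw [← div_pow, hid, div_pow]
    rw [mul_div_assoc, h1]
    have hDt : ((n.descFactorial a : ℝ)) ^ t = (n.descFactorial a : ℝ) * ((n.descFactorial a : ℝ)) ^ (t - 1) := by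
      conv_lhs => rw [show t = 1 + (t - 1) by omega]
      rw [pow_add, pow_one]
    rw [div_pow, hDt]
    field_simp
  rw [lhs_eq]
  congr 1
  -- product form
  have hmprod : ((m n).descFactorial a : ℝ) = ∏ i ∈ range a, ((m n : ℝ) - i) := by
    rw [Nat.descFactorial_eq_prod_range]
    push_cast
    refine Finset.prod_congr rfl fun i hi => ?_
    rw [Nat.cast_sub]
    exact le_trans (le_of_lt (Finset.mem_range.mp hi)) ham
  have hnprod : ((n).descFactorial a : ℝ) = ∏ i ∈ range a, ((n : ℝ) - i) := by
    rw [Nat.descFactorial_eq_prod_range]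
    push_cast
    refine Finset.prod_congr rfl fun i hi => ?_
    rw [Nat.cast_sub]
    exact le_trans (le_of_lt (Finset.mem_range.mp hi)) han
  rw [hmprod, hnprod, ← Finset.prod_pow, ← Finset.prod_pow, ← Finset.prod_div_distrib]


lemma b_tendsto (ht : 2 ≤ t) (hlam : 0 < lam) (a : ℕ) :
    Tendsto (fun n : ℕ => (n.choose a : ℝ)
        * (((n - a).choose (n - ⌈lam * (n : ℝ) ^ (((t : ℝ) - 1) / (t : ℝ))⌉₊) : ℕ) : ℝ) ^ t
        / (((n.choose (n - ⌈lam * (n : ℝ) ^ (((t : ℝ) - 1) / (t : ℝ))⌉₊) : ℕ) : ℝ)) ^ t)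
      atTop (nhds ((lam ^ t) ^ a / (a.factorial : ℝ))) := by
  have htpos : 0 < t := by omega
  set m : ℕ → ℕ := fun n => ⌈lam * (n : ℝ) ^ (((t : ℝ) - 1) / (t : ℝ))⌉₊ with hm
  have hev : ∀ᶠ n : ℕ in atTop, a ≤ m n ∧ m n ≤ n := by
    have h1 : ∀ᶠ n : ℕ in atTop, a ≤ m n := (aux_mtop t lam ht hlam).eventually_ge_atTop a
    filter_upwards [h1, aux_mle t lam ht hlam] with n h1 h2
    exact ⟨h1, h2⟩
  have hprod : Tendsto (fun n : ℕ =>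
      (1 / (a.factorial : ℝ)) * ∏ i ∈ range a, (((m n : ℝ) - i) ^ t / ((n : ℝ) - i) ^ (t - 1)))
      atTop (nhds ((1 / (a.factorial : ℝ)) * ∏ _i ∈ range a, lam ^ t)) := by
    apply Tendsto.const_mul
    exact tendsto_finset_prod (range a) (fun i _ => aux_factor t lam ht hlam i (aux_q t lam ht hlam))
  have : ((1 : ℝ) / (a.factorial : ℝ)) * ∏ _i ∈ range a, lam ^ t = (lam ^ t) ^ a / (a.factorial : ℝ) := by
    rw [Finset.prod_const, Finset.card_range]
    ring
  rw [this] at hprod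
  apply hprod.congr'
  filter_upwards [b_eventual_formula t htpos a hev] with n h
  exact h.symm

end

/-- Case III: with `s(n) = n − ⌈λ n^{(t−1)/t}⌉`, the number `X_t` of coupons missed after `t`
draws converges in distribution to `Po(λ^t)`. -/
theorem stmt12 (t : ℕ) (ht : 2 ≤ t) (lam : ℝ) (hlam : 0 < lam) :
    ∀ k : ℕ,
      Tendsto
        (fun n : ℕ =>
          pr n (n - ⌈lam * (n : ℝ) ^ (((t : ℝ) - 1) / (t : ℝ))⌉₊) t
            (fun f => missed f = k))
        atTop
        (nhds (Real.exp (-(lam ^ t)) * (lam ^ t) ^ k / (k.factorial : ℝ))) := by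
  intro k
  set μ : ℝ := lam ^ t with hμ
  have hμpos : 0 < μ := pow_pos hlam t
  set m : ℕ → ℕ := fun n => ⌈lam * (n : ℝ) ^ (((t : ℝ) - 1) / (t : ℝ))⌉₊ with hm
  set B : ℕ → ℕ → ℝ := fun a n => (n.choose a : ℝ)
      * (((n - a).choose (n - m n) : ℕ) : ℝ) ^ t
      / (((n.choose (n - m n) : ℕ) : ℝ)) ^ t with hB
  have hBlim : ∀ a : ℕ, Tendsto (B a) atTop (nhds (μ ^ a / (a.factorial : ℝ))) :=
    fun a => b_tendsto t lam ht hlam a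
  set P : ℕ → ℝ := fun n => pr n (n - m n) t (fun f => missed f = k) with hPdef
  have hNpos : ∀ n : ℕ, (0 : ℝ) < ((n.choose (n - m n) : ℕ) : ℝ) ^ t := by
    intro n
    have : 0 < n.choose (n - m n) := Nat.choose_pos (Nat.sub_le _ _)
    positivity
  -- the key bound after normalization
  have hbound : ∀ J n : ℕ,
      |P n - ∑ j ∈ range (J + 1), (-1 : ℝ) ^ j * ((k + j).choose j) * B (k + j) n|
        ≤ ((k + (J + 1)).choose (J + 1) : ℝ) * B (k + (J + 1)) n := by
    intro J n
    have h := key_ineq_s12 n (n - m n) t k J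
    have hPn : P n = (((draws n (n - m n) t).filter (fun f => missed f = k)).card : ℝ)
        / ((n.choose (n - m n) : ℝ)) ^ t := by
      simp only [hPdef, pr, card_draws, Finset.filter_congr_decidable]
      push_cast
      congr 1
      exact_mod_cast congrArg Finset.card (Finset.filter_congr_decidable _ _ _)
    have hS : (∑ j ∈ range (J + 1), (-1 : ℝ) ^ j * ((k + j).choose j) * B (k + j) n)
        = (∑ j ∈ range (J + 1), (-1 : ℝ) ^ j * ((k + j).choose j)
            * ((n.choose (k + j) : ℝ) * (((n - (k + j)).choose (n - m n) : ℕ) : ℝ) ^ t))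
          / ((n.choose (n - m n) : ℝ)) ^ t := by
      rw [Finset.sum_div]
      refine Finset.sum_congr rfl fun j _ => ?_
      simp only [hB]
      ring
    rw [hPn, hS, div_sub_div_same, abs_div, abs_of_pos (hNpos n)]
    rw [div_le_iff₀ (hNpos n)]
    calc |(((draws n (n - m n) t).filter (fun f => missed f = k)).card : ℝ)
          - ∑ j ∈ range (J + 1), (-1 : ℝ) ^ j * ((k + j).choose j)
              * ((n.choose (k + j) : ℝ) * (((n - (k + j)).choose (n - m n) : ℕ) : ℝ) ^ t)|
        ≤ ((k + (J + 1)).choose (J + 1) : ℝ)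
            * ((n.choose (k + (J + 1)) : ℝ) * (((n - (k + (J + 1))).choose (n - m n) : ℕ) : ℝ) ^ t) := by
          push_cast at h ⊢
          exact h
      _ = ((k + (J + 1)).choose (J + 1) : ℝ) * B (k + (J + 1)) n * ((n.choose (n - m n) : ℝ)) ^ t := by
          simp only [hB]
          rw [mul_assoc, div_mul_cancel₀ _ (ne_of_gt (hNpos n))]
  -- limits of partial sums
  have hterm : ∀ j : ℕ, (-1 : ℝ) ^ j * ((k + j).choose j) * (μ ^ (k + j) / ((k + j).factorial : ℝ))
      = (μ ^ k / (k.factorial : ℝ)) * ((-μ) ^ j / (j.factorial : ℝ)) := by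
    intro j
    have hcf : (((k + j).factorial : ℕ) : ℝ) = ((k + j).choose j : ℝ) * (k.factorial : ℝ) * (j.factorial : ℝ) := by
      have := Nat.add_choose_mul_factorial_mul_factorial k j
      exact_mod_cast this.symm
    have hC0 : ((k + j).choose j : ℝ) ≠ 0 := by
      have : 0 < (k + j).choose j := Nat.choose_pos (by omega)
      positivity
    rw [hcf]
    field_simp [Nat.factorial_ne_zero]
    ring
  set Lpart : ℕ → ℝ := fun J => (μ ^ k / (k.factorial : ℝ))
      * ∑ j ∈ range (J + 1), (-μ) ^ j / (j.factorial : ℝ) with hLpart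
  have hSL : ∀ J, (∑ j ∈ range (J + 1), (-1 : ℝ) ^ j * ((k + j).choose j)
      * (μ ^ (k + j) / ((k + j).factorial : ℝ))) = Lpart J := by
    intro J
    simp only [hLpart, Finset.mul_sum]
    exact Finset.sum_congr rfl fun j _ => hterm j
  have hLtend : Tendsto Lpart atTop
      (nhds (Real.exp (-(lam ^ t)) * (lam ^ t) ^ k / (k.factorial : ℝ))) := by
    have h1 : HasSum (fun j : ℕ => (-μ) ^ j / (j.factorial : ℝ)) (Real.exp (-μ)) := by
      rw [Real.exp_eq_exp_ℝ]
      exact NormedSpace.expSeries_div_hasSum_exp (-μ)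
    have h2 := h1.tendsto_sum_nat
    have h3 : Tendsto (fun J : ℕ => ∑ j ∈ range (J + 1), (-μ) ^ j / (j.factorial : ℝ))
        atTop (nhds (Real.exp (-μ))) := by
      exact (tendsto_add_atTop_iff_nat (f := fun J : ℕ => ∑ j ∈ range J, (-μ) ^ j / (j.factorial : ℝ)) 1).mpr h2
    have := h3.const_mul (μ ^ k / (k.factorial : ℝ))
    apply this.congr' ?_ |>.mono_right ?_
    · filter_upwards with J; rfl
    · apply le_of_eq
      congr 1
      rw [hμ]
      ring
  -- limits of the finite sums
  have hterm' : ∀ j : ℕ, ((k + j).choose j : ℝ) * (μ ^ (k + j) / ((k + j).factorial : ℝ))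
      = (μ ^ k / (k.factorial : ℝ)) * (μ ^ j / (j.factorial : ℝ)) := by
    intro j
    have hcf : (((k + j).factorial : ℕ) : ℝ)
        = ((k + j).choose j : ℝ) * (k.factorial : ℝ) * (j.factorial : ℝ) := by
      have := Nat.add_choose_mul_factorial_mul_factorial k j
      exact_mod_cast this.symm
    have hC0 : ((k + j).choose j : ℝ) ≠ 0 := by
      have : 0 < (k + j).choose j := Nat.choose_pos (by omega)
      positivity
    rw [hcf]
    field_simp [Nat.factorial_ne_zero]
    ring
  have hSlim : ∀ J : ℕ, Tendsto
      (fun n => ∑ j ∈ range (J + 1), (-1 : ℝ) ^ j * ((k + j).choose j) * B (k + j) n)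
      atTop (nhds (Lpart J)) := by
    intro J
    rw [← hSL J]
    apply tendsto_finset_sum
    intro j _
    have := (hBlim (k + j)).const_mul ((-1 : ℝ) ^ j * ((k + j).choose j))
    simpa [mul_assoc] using this
  set E : ℕ → ℝ := fun J => ((k + (J + 1)).choose (J + 1) : ℝ)
      * (μ ^ (k + (J + 1)) / ((k + (J + 1)).factorial : ℝ)) with hE
  have hElim : ∀ J : ℕ, Tendsto (fun n => ((k + (J + 1)).choose (J + 1) : ℝ) * B (k + (J + 1)) n)
      atTop (nhds (E J)) := fun J => (hBlim _).const_mul _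
  have hEtend : Tendsto E atTop (nhds 0) := by
    have h1 : Tendsto (fun J : ℕ => μ ^ J / (J.factorial : ℝ)) atTop (nhds 0) :=
      FloorSemiring.tendsto_pow_div_factorial_atTop μ
    have h2 : Tendsto (fun J : ℕ => μ ^ (J + 1) / ((J + 1).factorial : ℝ)) atTop (nhds 0) :=
      (tendsto_add_atTop_iff_nat (f := fun J : ℕ => μ ^ J / (J.factorial : ℝ)) 1).mpr h1
    have h3 := h2.const_mul (μ ^ k / (k.factorial : ℝ))
    rw [mul_zero] at h3
    apply h3.congr
    intro J
    exact (hterm' (J + 1)).symm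
  have hEnonneg : ∀ J, 0 ≤ E J := by
    intro J
    have : 0 ≤ μ := le_of_lt hμpos
    positivity
  -- epsilon argument
  rw [Metric.tendsto_atTop]
  intro ε hε
  obtain ⟨N1, hN1⟩ := Metric.tendsto_atTop.mp hLtend (ε / 4) (by linarith)
  obtain ⟨N2, hN2⟩ := Metric.tendsto_atTop.mp hEtend (ε / 4) (by linarith)
  set J := max N1 N2 with hJ
  have hL4 : |Lpart J - Real.exp (-(lam ^ t)) * (lam ^ t) ^ k / (k.factorial : ℝ)| < ε / 4 := by
    have := hN1 J (le_max_left _ _)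
    rwa [Real.dist_eq] at this
  have hE4 : E J < ε / 4 := by
    have := hN2 J (le_max_right _ _)
    rw [Real.dist_eq, sub_zero] at this
    exact lt_of_le_of_lt (le_abs_self _) this
  obtain ⟨N3, hN3⟩ := Metric.tendsto_atTop.mp (hSlim J) (ε / 4) (by linarith)
  obtain ⟨N4, hN4⟩ := Metric.tendsto_atTop.mp (hElim J) (ε / 4) (by linarith)
  refine ⟨max N3 N4, fun n hn => ?_⟩
  have hn3 := hN3 n (le_trans (le_max_left _ _) hn)
  have hn4 := hN4 n (le_trans (le_max_right _ _) hn)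
  rw [Real.dist_eq] at hn3 hn4 ⊢
  have hb := hbound J n
  have he : ((k + (J + 1)).choose (J + 1) : ℝ) * B (k + (J + 1)) n < ε / 2 := by
    have : ((k + (J + 1)).choose (J + 1) : ℝ) * B (k + (J + 1)) n - E J < ε / 4 :=
      lt_of_le_of_lt (le_abs_self _) hn4
    linarith
  calc |P n - Real.exp (-(lam ^ t)) * (lam ^ t) ^ k / (k.factorial : ℝ)|
      ≤ |P n - ∑ j ∈ range (J + 1), (-1 : ℝ) ^ j * ((k + j).choose j) * B (k + j) n|
        + |(∑ j ∈ range (J + 1), (-1 : ℝ) ^ j * ((k + j).choose j) * B (k + j) n) - Lpart J|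
        + |Lpart J - Real.exp (-(lam ^ t)) * (lam ^ t) ^ k / (k.factorial : ℝ)| := by
        have := abs_sub_le (P n)
          (∑ j ∈ range (J + 1), (-1 : ℝ) ^ j * ((k + j).choose j) * B (k + j) n)
          (Real.exp (-(lam ^ t)) * (lam ^ t) ^ k / (k.factorial : ℝ))
        have h2 := abs_sub_le
          (∑ j ∈ range (J + 1), (-1 : ℝ) ^ j * ((k + j).choose j) * B (k + j) n)
          (Lpart J)
          (Real.exp (-(lam ^ t)) * (lam ^ t) ^ k / (k.factorial : ℝ))
        linarith
    _ < ε := by linarith [hb, he, hn3, hL4]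
end

section
/- Let t ≥ 2, λ > 0, s(n) = n − ⌈λ n^{(t−1)/t}⌉, and Y_n the number of uniform s(n)-subset draws needed to collect all n coupons. Then Y_n converges in distribution to the random variable Z with P(Z = t) = e^{−λ^t} and P(Z = t+1) = 1 − e^{−λ^t}. -/
open Finset Filter
open scoped Classical

namespace CouponCC

lemma count_sub (n s i : ℕ) (A : Finset (Fin n)) :
    ((draws n s i).filter (fun f => ∀ j, f j ⊆ A)).card = (A.card.choose s) ^ i := by
  have h : (draws n s i).filter (fun f => ∀ j, f j ⊆ A)
      = Fintype.piFinset (fun _ : Fin i => A.powersetCard s) := by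
    ext f
    simp only [draws, Finset.mem_filter, Finset.mem_univ, true_and,
      Fintype.mem_piFinset, Finset.mem_powersetCard, ← forall_and]
    exact forall_congr' fun j => and_comm
  rw [h, Fintype.card_piFinset]
  simp [Finset.card_powersetCard]

lemma draws_card (n s i : ℕ) : (draws n s i).card = (n.choose s) ^ i := by
  have := count_sub n s i Finset.univ
  simpa [Finset.filter_true_of_mem, Finset.subset_univ] using this



lemma card_collected (n s i : ℕ) :
    (((draws n s i).filter (fun f => collected f)).card : ℝ)
      = ∑ A ∈ (Finset.univ : Finset (Fin n)).powerset,
          (-1 : ℝ) ^ A.card * (((n - A.card).choose s : ℕ) : ℝ) ^ i := by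
  have hsub : ∀ (f : Fin i → Finset (Fin n)) (A : Finset (Fin n)),
      (∀ j, f j ⊆ Aᶜ) ↔ A ⊆ (Finset.univ.biUnion f)ᶜ := by
    intro f A
    simp only [Finset.subset_iff, Finset.mem_compl, Finset.mem_biUnion, Finset.mem_univ,
      true_and, not_exists]
    tauto
  have key : ∀ f : Fin i → Finset (Fin n),
      (∑ A ∈ (Finset.univ : Finset (Fin n)).powerset,
        if (∀ j, f j ⊆ Aᶜ) then ((-1:ℝ) ^ A.card) else 0)
      = if collected f then 1 else 0 := by
    intro f
    have h1 : ((Finset.univ : Finset (Fin n)).powerset).filter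
          (fun A => ∀ j, f j ⊆ Aᶜ) = ((Finset.univ.biUnion f)ᶜ).powerset := by
      ext A
      simp [hsub f A]
    have hR : (∑ A ∈ ((Finset.univ.biUnion f)ᶜ).powerset, (-1:ℝ)^A.card)
        = if (Finset.univ.biUnion f)ᶜ = ∅ then 1 else 0 := by
      have h := Finset.sum_powerset_neg_one_pow_card (x := (Finset.univ.biUnion f)ᶜ)
      exact_mod_cast h
    rw [Finset.sum_ite, Finset.sum_const_zero, add_zero, h1, hR]
    congr 1
    simp only [Finset.compl_eq_empty_iff, eq_iff_iff]
    constructor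
    · intro h a
      have : a ∈ Finset.univ.biUnion f := h ▸ Finset.mem_univ a
      simpa using this
    · intro h
      ext a
      simpa using h a
  have lhs : (((draws n s i).filter (fun f => collected f)).card : ℝ)
      = ∑ f ∈ draws n s i, if collected f then (1:ℝ) else 0 := by
    rw [Finset.sum_boole]
  rw [lhs]
  simp_rw [← key]
  rw [Finset.sum_comm]
  refine Finset.sum_congr rfl fun A _ => ?_
  rw [Finset.sum_ite, Finset.sum_const_zero, add_zero, Finset.sum_const, nsmul_eq_mul,
    mul_comm, count_sub n s i Aᶜ]
  rw [Finset.card_compl]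
  push_cast
  simp

lemma PYle_eq_sum (n s i : ℕ) (hs : s ≤ n) :
    PYle n s i = ∑ k ∈ Finset.range (n+1),
      (-1:ℝ)^k * (n.choose k) * ((((n-k).choose s : ℕ) : ℝ) / ((n.choose s : ℕ) : ℝ)) ^ i := by
  have hcp : 0 < n.choose s := Nat.choose_pos hs
  have hpos : (0:ℝ) < ((n.choose s : ℕ) : ℝ) ^ i := by positivity
  unfold PYle pr
  rw [card_collected, draws_card]
  rw [Finset.powerset_univ]
  have hdec := Finset.powerset_card_disjiUnion (Finset.univ : Finset (Fin n))
  rw [← Finset.powerset_univ, hdec]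
  erw [Finset.sum_disjiUnion]
  rw [Finset.card_univ,
    Fintype.card_fin]
  push_cast
  rw [Finset.sum_div]
  refine Finset.sum_congr rfl fun k hk => ?_
  have hstep : ∀ A ∈ Finset.powersetCard k (Finset.univ : Finset (Fin n)),
      (-1:ℝ) ^ A.card * (((n - A.card).choose s : ℕ):ℝ) ^ i / ((n.choose s : ℕ):ℝ) ^ i
        = (-1:ℝ) ^ k * (((n - k).choose s : ℕ):ℝ) ^ i / ((n.choose s : ℕ):ℝ) ^ i := by
    intro A hA
    obtain ⟨-, hAc⟩ := Finset.mem_powersetCard.1 hA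
    rw [hAc]
  rw [Finset.sum_div, Finset.sum_congr rfl hstep, Finset.sum_const, Finset.card_powersetCard,
    Finset.card_univ, Fintype.card_fin, nsmul_eq_mul, div_pow]
  ring


lemma missed_eq_zero_iff {n i : ℕ} (f : Fin i → Finset (Fin n)) :
    missed f = 0 ↔ collected f := by
  simp only [missed, Finset.card_eq_zero, Finset.filter_eq_empty_iff, Finset.mem_univ,
    true_implies, collected, not_forall, not_not]

lemma count_pair (n s i : ℕ) (B : Finset (Fin n)) :
    ((draws n s i).filter (fun f => ∀ a ∈ B, ∀ j, a ∉ f j)).card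
      = ((n - B.card).choose s) ^ i := by
  have h : (draws n s i).filter (fun f => ∀ a ∈ B, ∀ j, a ∉ f j)
      = (draws n s i).filter (fun f => ∀ j, f j ⊆ Bᶜ) := by
    apply Finset.filter_congr
    intro f _
    simp only [eq_iff_iff, Finset.subset_iff, Finset.mem_compl]
    tauto
  rw [h, count_sub, Finset.card_compl, Fintype.card_fin]

lemma sum_missed (n s i : ℕ) :
    (∑ f ∈ draws n s i, (missed f : ℝ)) = n * (((n-1).choose s : ℕ) : ℝ) ^ i := by
  have hm : ∀ f : Fin i → Finset (Fin n),
      (missed f : ℝ) = ∑ a : Fin n, if (∀ j, a ∉ f j) then (1:ℝ) else 0 := by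
    intro f; rw [Finset.sum_boole]; rfl
  simp_rw [hm]
  rw [Finset.sum_comm]
  have hpt : ∀ a : Fin n,
      (∑ f ∈ draws n s i, if (∀ j, a ∉ f j) then (1:ℝ) else 0)
        = (((n-1).choose s : ℕ) : ℝ) ^ i := by
    intro a
    rw [Finset.sum_boole]
    have : (draws n s i).filter (fun f => ∀ j, a ∉ f j)
        = (draws n s i).filter (fun f => ∀ b ∈ ({a} : Finset (Fin n)), ∀ j, b ∉ f j) := by
      apply Finset.filter_congr; intro f _; simp
    rw [this, count_pair]
    norm_num
  rw [Finset.sum_congr rfl (fun a _ => hpt a), Finset.sum_const, Finset.card_univ,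
    Fintype.card_fin, nsmul_eq_mul]

lemma sum_missed_sq (n s i : ℕ) :
    (∑ f ∈ draws n s i, (missed f : ℝ)^2)
      = n * (((n-1).choose s : ℕ) : ℝ) ^ i
        + (n:ℝ) * ((n:ℝ) - 1) * (((n-2).choose s : ℕ) : ℝ) ^ i := by
  have hm : ∀ f : Fin i → Finset (Fin n),
      (missed f : ℝ)^2 = ∑ a : Fin n, ∑ b : Fin n,
        if (∀ j, a ∉ f j) ∧ (∀ j, b ∉ f j) then (1:ℝ) else 0 := by
    intro f
    have h1 : (missed f : ℝ) = ∑ a : Fin n, if (∀ j, a ∉ f j) then (1:ℝ) else 0 := by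
      rw [Finset.sum_boole]; rfl
    rw [sq, h1, Finset.sum_mul_sum]
    refine Finset.sum_congr rfl fun a _ => Finset.sum_congr rfl fun b _ => ?_
    by_cases ha : ∀ j, a ∉ f j <;> by_cases hb : ∀ j, b ∉ f j <;>
      simp [ha, hb]
  simp_rw [hm]
  rw [Finset.sum_comm]
  have hpt : ∀ a : Fin n,
      (∑ f ∈ draws n s i, ∑ b : Fin n,
        if (∀ j, a ∉ f j) ∧ (∀ j, b ∉ f j) then (1:ℝ) else 0)
      = (((n-1).choose s : ℕ) : ℝ) ^ i + ((n:ℝ) - 1) * (((n-2).choose s : ℕ) : ℝ) ^ i := by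
    intro a
    rw [Finset.sum_comm]
    have hb : ∀ b : Fin n,
        (∑ f ∈ draws n s i, if (∀ j, a ∉ f j) ∧ (∀ j, b ∉ f j) then (1:ℝ) else 0)
        = (((n - ({a, b} : Finset (Fin n)).card).choose s : ℕ) : ℝ) ^ i := by
      intro b
      rw [Finset.sum_boole]
      have : (draws n s i).filter (fun f => (∀ j, a ∉ f j) ∧ (∀ j, b ∉ f j))
          = (draws n s i).filter
              (fun f => ∀ c ∈ ({a, b} : Finset (Fin n)), ∀ j, c ∉ f j) := by
        apply Finset.filter_congr; intro f _
        simp only [Finset.mem_insert, Finset.mem_singleton, eq_iff_iff]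
        constructor
        · rintro ⟨h1, h2⟩ c (rfl|rfl) <;> assumption
        · intro h; exact ⟨h a (Or.inl rfl), h b (Or.inr rfl)⟩
      rw [this, count_pair]
      norm_num
    rw [Finset.sum_congr rfl (fun b _ => hb b)]
    rw [← Finset.sum_erase_add _ _ (Finset.mem_univ a)]
    have hdiag : ({a, a} : Finset (Fin n)).card = 1 := by simp
    have hoff : ∀ b ∈ Finset.univ.erase a,
        ((((n - ({a, b} : Finset (Fin n)).card).choose s : ℕ) : ℝ)) ^ i
          = (((n-2).choose s : ℕ) : ℝ) ^ i := by
      intro b hb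
      have hba : b ≠ a := Finset.ne_of_mem_erase hb
      have : ({a, b} : Finset (Fin n)).card = 2 := by
        rw [Finset.card_insert_of_notMem (by simp [hba.symm]), Finset.card_singleton]
      rw [this]
    rw [Finset.sum_congr rfl hoff, Finset.sum_const, Finset.card_erase_of_mem
      (Finset.mem_univ a), Finset.card_univ, Fintype.card_fin, hdiag, nsmul_eq_mul]
    have hn : 0 < n := Fin.pos a
    push_cast [Nat.cast_sub hn]
    ring
  rw [Finset.sum_congr rfl (fun a _ => hpt a), Finset.sum_const, Finset.card_univ,
    Fintype.card_fin, nsmul_eq_mul]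
  ring


lemma desc_ind (n : ℕ) : ∀ (k m : ℕ), k ≤ m → m ≤ n →
    (n-k).choose (m-k) * n.descFactorial k = n.choose m * m.descFactorial k := by
  intro k
  induction k with
  | zero => intro m _ _; simp
  | succ k ih =>
    intro m hk hm
    have hkm : k ≤ m := Nat.le_of_succ_le hk
    have hkn : k < n := Nat.lt_of_lt_of_le (Nat.lt_of_lt_of_le (Nat.lt_of_succ_le hk) hm) (le_refl n)
    have hstep : (n-k) * ((n-(k+1)).choose (m-(k+1))) = (n-k).choose (m-k) * (m-k) := by
      have h1 : n - (k+1) = (n-k) - 1 := by omega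
      have h2 : m - (k+1) = (m-k) - 1 := by omega
      have h3 : n - k = Nat.succ ((n-k) - 1) := by omega
      have h4 : m - k = Nat.succ ((m-k) - 1) := by omega
      rw [h1, h2]
      calc (n-k) * ((n-k-1).choose (m-k-1))
          = Nat.succ ((n-k)-1) * ((n-k-1).choose (m-k-1)) := by rw [← h3]
        _ = ((n-k-1)+1).choose ((m-k-1)+1) * Nat.succ ((m-k)-1) := by
              exact Nat.add_one_mul_choose_eq _ _
        _ = (n-k).choose (m-k) * (m-k) := by
              rw [← h4]; congr 2 <;> omega
    rw [Nat.descFactorial_succ, Nat.descFactorial_succ]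
    calc (n-(k+1)).choose (m-(k+1)) * ((n - k) * n.descFactorial k)
        = ((n-k) * ((n-(k+1)).choose (m-(k+1)))) * n.descFactorial k := by ring
      _ = ((n-k).choose (m-k) * (m-k)) * n.descFactorial k := by rw [hstep]
      _ = (m-k) * ((n-k).choose (m-k) * n.descFactorial k) := by ring
      _ = (m-k) * (n.choose m * m.descFactorial k) := by rw [ih m hkm hm]
      _ = n.choose m * ((m-k) * m.descFactorial k) := by ring

lemma bridge (n m k : ℕ) (hm : m ≤ n) (hk : k ≤ n) :
    (n-k).choose (n-m) * n.descFactorial k = n.choose (n-m) * m.descFactorial k := by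
  rcases le_or_gt k m with hkm | hmk
  · have h1 : (n-k).choose (n-m) = (n-k).choose (m-k) := by
      have : n - m = (n-k) - (m-k) := by omega
      rw [this, Nat.choose_symm (by omega)]
    have h2 : n.choose (n-m) = n.choose m := Nat.choose_symm hm
    rw [h1, h2]
    exact desc_ind n k m hkm hm
  · have h1 : (n-k).choose (n-m) = 0 := Nat.choose_eq_zero_of_lt (by omega)
    have h2 : m.descFactorial k = 0 := Nat.descFactorial_eq_zero_iff_lt.2 hmk
    rw [h1, h2, mul_zero, zero_mul]

lemma dFpow (n m : ℕ) (hm : m ≤ n) : ∀ k, m.descFactorial k * n^k ≤ m^k * n.descFactorial k := by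
  intro k
  induction k with
  | zero => simp
  | succ k ih =>
    rw [Nat.descFactorial_succ, Nat.descFactorial_succ, pow_succ, pow_succ]
    have h1 : (m-k) * n ≤ m * (n-k) := by
      rcases le_or_gt k m with h | h
      · have hkn : k ≤ n := le_trans h hm
        zify [h, hkn]
        have hm' : (m:ℤ) ≤ n := by exact_mod_cast hm
        have hk0 : (0:ℤ) ≤ k := by positivity
        nlinarith
      · simp [Nat.sub_eq_zero_of_le (le_of_lt h)]
    calc (m-k) * m.descFactorial k * (n^k * n)
        = ((m-k)*n) * (m.descFactorial k * n^k) := by ring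
      _ ≤ (m*(n-k)) * (m^k * n.descFactorial k) := Nat.mul_le_mul h1 ih
      _ = m^k * m * ((n-k) * n.descFactorial k) := by ring

lemma ndF_pos {n k : ℕ} (hk : k ≤ n) : 0 < n.descFactorial k := by
  rw [Nat.descFactorial_eq_factorial_mul_choose]
  exact Nat.mul_pos (Nat.factorial_pos k) (Nat.choose_pos hk)

lemma q_eq (n m k : ℕ) (hm : m ≤ n) (hk : k ≤ n) :
    (((n-k).choose (n-m) : ℕ) : ℝ) / ((n.choose (n-m) : ℕ) : ℝ)
      = ((m.descFactorial k : ℕ) : ℝ) / ((n.descFactorial k : ℕ) : ℝ) := by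
  have hc : 0 < n.choose (n-m) := Nat.choose_pos (Nat.sub_le n m)
  have hd : 0 < n.descFactorial k := ndF_pos hk
  rw [div_eq_div_iff (by exact_mod_cast hc.ne') (by exact_mod_cast hd.ne')]
  · rw [mul_comm (((m.descFactorial k : ℕ)):ℝ)]
    exact_mod_cast bridge n m k hm hk


section estimates

variable (n m i : ℕ)

lemma q_one (hm : m ≤ n) (hn : 1 ≤ n) :
    (((n-1).choose (n-m) : ℕ) : ℝ) / ((n.choose (n-m) : ℕ) : ℝ) = (m:ℝ)/(n:ℝ) := by
  rw [q_eq n m 1 hm hn]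
  simp [Nat.descFactorial_one]

lemma q_two (hm : m ≤ n) (hn : 2 ≤ n) (h1 : 1 ≤ m) :
    (((n-2).choose (n-m) : ℕ) : ℝ) / ((n.choose (n-m) : ℕ) : ℝ)
      = ((m:ℝ) * ((m:ℝ)-1))/((n:ℝ) * ((n:ℝ)-1)) := by
  rw [q_eq n m 2 hm hn]
  have e1 : m.descFactorial 2 = m * (m - 1) := by
    rw [Nat.descFactorial_succ, Nat.descFactorial_one]; ring
  have e2 : n.descFactorial 2 = n * (n - 1) := by
    rw [Nat.descFactorial_succ, Nat.descFactorial_one]; ring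
  rw [e1, e2]
  push_cast [Nat.cast_sub h1, Nat.cast_sub (le_trans h1 hm)]
  ring_nf

lemma Npos (hm : m ≤ n) : (0:ℝ) < ((n.choose (n-m) : ℕ) : ℝ) ^ i := by
  have := Nat.choose_pos (Nat.sub_le n m)
  positivity

lemma markov_bound (hm : m ≤ n) (hn : 1 ≤ n) :
    pr n (n-m) i (fun f => ¬ collected f) ≤ (n:ℝ) * ((m:ℝ)/(n:ℝ))^i := by
  have hN := Npos n m i hm
  have hcard : ((draws n (n-m) i).card : ℝ) = ((n.choose (n-m) : ℕ) : ℝ) ^ i := by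
    rw [draws_card]; push_cast; ring
  have hfil : (((draws n (n-m) i).filter (fun f => ¬ collected f)).card : ℝ)
      ≤ ∑ f ∈ draws n (n-m) i, (missed f : ℝ) := by
    rw [Finset.card_eq_sum_ones]
    push_cast
    calc (∑ _f ∈ (draws n (n-m) i).filter (fun f => ¬ collected f), (1:ℝ))
        ≤ ∑ f ∈ (draws n (n-m) i).filter (fun f => ¬ collected f), (missed f : ℝ) := by
          apply Finset.sum_le_sum
          intro f hf
          have := (Finset.mem_filter.1 hf).2
          have hne : missed f ≠ 0 := fun h => this ((missed_eq_zero_iff f).1 h)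
          exact_mod_cast Nat.one_le_iff_ne_zero.2 hne
      _ ≤ ∑ f ∈ draws n (n-m) i, (missed f : ℝ) := by
          apply Finset.sum_le_sum_of_subset_of_nonneg (Finset.filter_subset _ _)
          intros; positivity
  unfold pr
  rw [Finset.filter_congr_decidable, hcard, div_le_iff₀ hN]
  calc (((draws n (n-m) i).filter (fun f => ¬ collected f)).card : ℝ)
      ≤ ∑ f ∈ draws n (n-m) i, (missed f : ℝ) := hfil
    _ = n * (((n-1).choose (n-m) : ℕ) : ℝ) ^ i := sum_missed n (n-m) i
    _ = n * ((m:ℝ)/(n:ℝ))^i * ((n.choose (n-m) : ℕ) : ℝ) ^ i := by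
        rw [← q_one n m hm hn, div_pow, mul_assoc,
          div_mul_cancel₀ _ (ne_of_gt (Npos n m i hm))]
end estimates

section secmom
variable (n m i : ℕ)

set_option maxHeartbeats 1000000 in
lemma secmom_bound (hm : m ≤ n) (h1 : 1 ≤ m) (hn : 2 ≤ n) :
    pr n (n-m) i (fun f => collected f)
      ≤ 1 / (1 + (n:ℝ) * ((m:ℝ)/(n:ℝ))^i) := by
  classical
  set s := n - m with hs
  set D := draws n s i with hD
  set N : ℝ := ((n.choose s : ℕ) : ℝ) ^ i with hN
  have hNpos : (0:ℝ) < N := Npos n m i hm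
  have hn1 : 1 ≤ n := by omega
  have hnR : (0:ℝ) < n := by positivity
  set E1 : ℝ := (n:ℝ) * ((m:ℝ)/(n:ℝ))^i with hE1
  have hE1pos : 0 < E1 := by
    have : (0:ℝ) < (m:ℝ)/(n:ℝ) := by positivity
    positivity
  have hcard : ((D.card : ℕ) : ℝ) = N := by rw [hD, draws_card]; push_cast; ring
  -- the two moments
  have hq1 : (((n-1).choose s : ℕ) : ℝ) ^ i = ((m:ℝ)/(n:ℝ))^i * N := by
    rw [hN, ← q_one n m hm hn1, div_pow, div_mul_cancel₀ _ (ne_of_gt (Npos n m i hm))]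
  have hS1 : (∑ f ∈ D, (missed f : ℝ)) = E1 * N := by
    rw [hD, sum_missed, hq1, hE1]; ring
  have hS2le : (∑ f ∈ D, (missed f : ℝ)^2) ≤ (E1 + E1^2) * N := by
    rw [hD, sum_missed_sq]
    have hq2 : (((n-2).choose s : ℕ) : ℝ) ^ i
        = (((m:ℝ) * ((m:ℝ)-1))/((n:ℝ) * ((n:ℝ)-1)))^i * N := by
      rw [hN, ← q_two n m hm hn h1, div_pow, div_mul_cancel₀ _ (ne_of_gt (Npos n m i hm))]
    rw [hq1, hq2]
    have hfrac : ((m:ℝ) * ((m:ℝ)-1))/((n:ℝ) * ((n:ℝ)-1)) ≤ ((m:ℝ)/(n:ℝ))^2 := by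
      have hmR : (1:ℝ) ≤ (m:ℝ) := by exact_mod_cast h1
      have hnn : (1:ℝ) < (n:ℝ) := by exact_mod_cast hn
      have hmn : (m:ℝ) ≤ (n:ℝ) := by exact_mod_cast hm
      have hm0 : (0:ℝ) ≤ (m:ℝ) := by positivity
      have hn0 : (0:ℝ) ≤ (n:ℝ) := by positivity
      have hkey : (0:ℝ) ≤ (m:ℝ)*(n:ℝ)*((n:ℝ)-(m:ℝ)) :=
        mul_nonneg (mul_nonneg hm0 hn0) (by linarith)
      rw [div_pow, div_le_div_iff₀ (by nlinarith) (by positivity)]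
      nlinarith
    have hfrac0 : (0:ℝ) ≤ ((m:ℝ) * ((m:ℝ)-1))/((n:ℝ) * ((n:ℝ)-1)) := by
      have hmR : (1:ℝ) ≤ (m:ℝ) := by exact_mod_cast h1
      have hnn : (1:ℝ) < (n:ℝ) := by exact_mod_cast hn
      apply div_nonneg <;> nlinarith
    have key : (n:ℝ) * ((n:ℝ)-1) * (((m:ℝ) * ((m:ℝ)-1))/((n:ℝ) * ((n:ℝ)-1)))^i
        ≤ E1^2 := by
      have h2 : (((m:ℝ) * ((m:ℝ)-1))/((n:ℝ) * ((n:ℝ)-1)))^i ≤ (((m:ℝ)/(n:ℝ))^2)^i :=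
        pow_le_pow_left₀ hfrac0 hfrac i
      have hnn : (1:ℝ) < (n:ℝ) := by exact_mod_cast hn
      calc (n:ℝ) * ((n:ℝ)-1) * (((m:ℝ) * ((m:ℝ)-1))/((n:ℝ) * ((n:ℝ)-1)))^i
          ≤ (n:ℝ) * (n:ℝ) * (((m:ℝ)/(n:ℝ))^2)^i := by
            apply mul_le_mul (by nlinarith) h2 (by positivity) (by positivity)
        _ = E1^2 := by rw [hE1, ← pow_mul, mul_pow, pow_mul]; ring
    nlinarith [hNpos]
  -- Cauchy–Schwarz
  set W : ℝ := ((D.filter (fun f => ¬ collected f)).card : ℝ) with hW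
  have hCS : (E1 * N)^2 ≤ W * ((E1 + E1^2) * N) := by
    have cs := Finset.sum_mul_sq_le_sq_mul_sq (D.filter (fun f => ¬ collected f))
      (fun _ => (1:ℝ)) (fun f => (missed f : ℝ))
    simp only [one_pow, one_mul, Finset.sum_const, nsmul_eq_mul, mul_one] at cs
    have hsum_eq : (∑ f ∈ D.filter (fun f => ¬ collected f), (missed f : ℝ))
        = ∑ f ∈ D, (missed f : ℝ) := by
      apply Finset.sum_filter_of_ne
      intro f _ hne
      intro hc
      exact (fun h => hne (by exact_mod_cast congrArg Nat.cast h))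
        ((missed_eq_zero_iff f).2 hc)
    have hsq_le : (∑ f ∈ D.filter (fun f => ¬ collected f), (missed f : ℝ)^2)
        ≤ ∑ f ∈ D, (missed f : ℝ)^2 := by
      apply Finset.sum_le_sum_of_subset_of_nonneg (Finset.filter_subset _ _)
      intros; positivity
    calc (E1 * N)^2 = (∑ f ∈ D, (missed f : ℝ))^2 := by rw [hS1]
      _ = (∑ f ∈ D.filter (fun f => ¬ collected f), (missed f : ℝ))^2 := by rw [hsum_eq]
      _ ≤ W * (∑ f ∈ D.filter (fun f => ¬ collected f), (missed f : ℝ)^2) := cs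
      _ ≤ W * ((E1 + E1^2) * N) := by
          apply mul_le_mul_of_nonneg_left (le_trans hsq_le hS2le) (by rw [hW]; positivity)
  have hWlow : E1 / (1 + E1) * N ≤ W := by
    have hEN : (0:ℝ) < (E1 + E1^2) * N := by positivity
    rw [div_mul_eq_mul_div, div_le_iff₀ (by positivity)]
    have h2 : (E1 * N)^2 / ((E1 + E1^2) * N) ≤ W := by
      rw [div_le_iff₀ hEN]; exact hCS
    calc E1 * N = (E1 * N)^2 / ((E1 + E1^2) * N) * (1 + E1) := by
          field_simp
      _ ≤ W * (1 + E1) := by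
          apply mul_le_mul_of_nonneg_right h2 (by positivity)
  -- conclude
  have hsplit : ((D.filter (fun f => collected f)).card : ℝ) = N - W := by
    have hone : ∀ f : Fin i → Finset (Fin n),
        (if collected f then (1:ℝ) else 0) + (if ¬ collected f then (1:ℝ) else 0) = 1 := by
      intro f; by_cases h : collected f <;> simp [h]
    have hsum : ((D.filter (fun f => collected f)).card : ℝ)
        + ((D.filter (fun f => ¬ collected f)).card : ℝ) = (D.card : ℝ) := by
      rw [← Finset.sum_boole, ← Finset.sum_boole, ← Finset.sum_add_distrib]
      rw [Finset.sum_congr rfl (fun f _ => hone f), Finset.sum_const, nsmul_eq_mul, mul_one]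
    rw [hW, ← hcard]
    linarith
  have h1E : (0:ℝ) < 1 + E1 := by positivity
  have hW2 : E1 * N ≤ W * (1 + E1) := by
    calc E1 * N = E1/(1+E1)*N*(1+E1) := by field_simp
      _ ≤ W * (1+E1) := mul_le_mul_of_nonneg_right hWlow (le_of_lt h1E)
  unfold pr
  rw [Finset.filter_congr_decidable, ← hD, hcard, hsplit, div_le_div_iff₀ hNpos h1E]
  nlinarith
end secmom


noncomputable def cex (t : ℕ) : ℝ := ((t : ℝ) - 1) / (t : ℝ)
noncomputable def mf (t : ℕ) (lam : ℝ) (n : ℕ) : ℕ := ⌈lam * (n : ℝ) ^ (cex t)⌉₊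

section asymp
variable {t : ℕ} {lam : ℝ}

lemma htR (ht : 2 ≤ t) : (0:ℝ) < (t:ℝ) := by
  have : 0 < t := by omega
  exact_mod_cast this

lemma hc_pos (ht : 2 ≤ t) : 0 < cex t := by
  have h1 : (1:ℝ) ≤ (t:ℝ) := by exact_mod_cast (by omega : 1 ≤ t)
  have h2 : (1:ℝ) < (t:ℝ) := by exact_mod_cast (by omega : 1 < t)
  unfold cex
  apply div_pos <;> linarith

lemma hc_lt_one (ht : 2 ≤ t) : cex t < 1 := by
  have h2 : (0:ℝ) < (t:ℝ) := htR ht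
  unfold cex
  rw [div_lt_one h2]
  linarith

lemma npc_tendsto (ht : 2 ≤ t) : Tendsto (fun n : ℕ => (n:ℝ) ^ (cex t)) atTop atTop :=
  (tendsto_rpow_atTop (hc_pos ht)).comp tendsto_natCast_atTop_atTop

lemma npc_pos (ht : 2 ≤ t) {n : ℕ} (hn : 1 ≤ n) : (0:ℝ) < (n:ℝ) ^ (cex t) := by
  have : (0:ℝ) < (n:ℝ) := by exact_mod_cast hn
  positivity

/-- `m n / n^c → lam` -/
lemma mf_div_tendsto (ht : 2 ≤ t) (hlam : 0 < lam) : Tendsto (fun n : ℕ => ((mf t lam n : ℕ):ℝ) / (n:ℝ) ^ (cex t))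
    atTop (nhds lam) := by
  have hub : Tendsto (fun n : ℕ => lam + ((n:ℝ) ^ (cex t))⁻¹) atTop (nhds (lam + 0)) :=
    tendsto_const_nhds.add (tendsto_inv_atTop_zero.comp (npc_tendsto ht))
  rw [add_zero] at hub
  apply tendsto_of_tendsto_of_tendsto_of_le_of_le' (tendsto_const_nhds) hub
  · filter_upwards [eventually_ge_atTop 1] with n hn
    have hpos := npc_pos ht hn
    rw [le_div_iff₀ hpos]
    calc lam * (n:ℝ) ^ (cex t) ≤ ((mf t lam n : ℕ):ℝ) := Nat.le_ceil _
      _ = ((mf t lam n : ℕ):ℝ) := rfl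
  · filter_upwards [eventually_ge_atTop 1] with n hn
    have hpos := npc_pos ht hn
    rw [div_le_iff₀ hpos]
    have h1 : ((mf t lam n : ℕ):ℝ) < lam * (n:ℝ) ^ (cex t) + 1 :=
      Nat.ceil_lt_add_one (by positivity)
    have : (lam + ((n:ℝ) ^ (cex t))⁻¹) * (n:ℝ) ^ (cex t)
        = lam * (n:ℝ) ^ (cex t) + 1 := by field_simp
    rw [this]
    linarith

lemma mf_tendsto_atTop (ht : 2 ≤ t) (hlam : 0 < lam) : Tendsto (fun n : ℕ => mf t lam n) atTop atTop := by
  apply tendsto_atTop_atTop.2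
  intro b
  have h := (npc_tendsto (t := t) ht).eventually_ge_atTop ((b:ℝ)/lam)
  rw [eventually_atTop] at h
  obtain ⟨N, hN⟩ := h
  refine ⟨N, fun n hn => ?_⟩
  have h2 : (b:ℝ) ≤ lam * (n:ℝ) ^ (cex t) := by
    have hh := hN n hn
    rw [div_le_iff₀ hlam] at hh
    linarith
  have := Nat.le_ceil (lam * (n:ℝ) ^ (cex t))
  have : (b:ℝ) ≤ ((mf t lam n : ℕ):ℝ) := le_trans h2 (Nat.le_ceil _)
  exact_mod_cast this

/-- `(m n - j) / n^c → lam` -/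
lemma mf_sub_div_tendsto (ht : 2 ≤ t) (hlam : 0 < lam) (j : ℕ) :
    Tendsto (fun n : ℕ => ((mf t lam n - j : ℕ):ℝ) / (n:ℝ) ^ (cex t)) atTop (nhds lam) := by
  have hj : Tendsto (fun n : ℕ => (j:ℝ) * ((n:ℝ) ^ (cex t))⁻¹) atTop (nhds 0) := by
    have := tendsto_inv_atTop_zero.comp (npc_tendsto ht)
    have h2 := this.const_mul (j:ℝ)
    simpa using h2
  have hmain := (mf_div_tendsto ht hlam).sub hj
  rw [sub_zero] at hmain
  apply hmain.congr'
  filter_upwards [(mf_tendsto_atTop ht hlam).eventually_ge_atTop j,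
    eventually_ge_atTop 1] with n hmn hn
  have hpos := npc_pos ht hn
  rw [Nat.cast_sub hmn]
  field_simp

/-- `n / (n - j) → 1` -/
lemma nsub_div_tendsto (j : ℕ) :
    Tendsto (fun n : ℕ => (n:ℝ) / ((n - j : ℕ):ℝ)) atTop (nhds 1) := by
  have h1 : Tendsto (fun n : ℕ => (n:ℝ) - j) atTop atTop :=
    tendsto_atTop_add_const_right _ (-(j:ℝ)) tendsto_natCast_atTop_atTop
  have h2 : Tendsto (fun n : ℕ => 1 + (j:ℝ) * ((n:ℝ) - j)⁻¹) atTop (nhds (1 + (j:ℝ) * 0)) :=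
    tendsto_const_nhds.add (tendsto_const_nhds.mul (tendsto_inv_atTop_zero.comp h1))
  rw [mul_zero, add_zero] at h2
  apply h2.congr'
  filter_upwards [eventually_ge_atTop (j+1)] with n hn
  have hj : j ≤ n := by omega
  have hpos : (0:ℝ) < (n:ℝ) - j := by
    have : (j:ℝ) < (n:ℝ) := by exact_mod_cast (by omega : j < n)
    linarith
  rw [Nat.cast_sub hj]
  field_simp
  ring

/-- key exponent identity -/
lemma rpow_ct {n : ℕ} (hn : 1 ≤ n) (ht : 2 ≤ t) :
    ((n:ℝ) ^ (cex t)) ^ t = (n:ℝ) ^ (t - 1) := by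
  have hn0 : (0:ℝ) ≤ (n:ℝ) := by positivity
  have h1 : ((n:ℝ) ^ (cex t)) ^ t = (n:ℝ) ^ (cex t * t) := by
    rw [← Real.rpow_natCast ((n:ℝ) ^ (cex t)) t, ← Real.rpow_mul hn0]
  have h2 : cex t * (t:ℝ) = (t:ℝ) - 1 := by
    unfold cex
    field_simp
  have h3 : (t:ℝ) - 1 = ((t - 1 : ℕ):ℝ) := by
    push_cast [Nat.cast_sub (by omega : 1 ≤ t)]
    ring
  rw [h1, h2, h3, Real.rpow_natCast]

/-- the main factor limit -/
lemma factor_tendsto (ht : 2 ≤ t) (hlam : 0 < lam) (j : ℕ) :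
    Tendsto (fun n : ℕ => ((mf t lam n - j : ℕ):ℝ) ^ t / ((n - j : ℕ):ℝ) ^ (t - 1))
      atTop (nhds (lam ^ t)) := by
  have hA := (mf_sub_div_tendsto ht hlam j).pow t
  have hB := (nsub_div_tendsto j).pow (t-1)
  have hmul := hA.mul hB
  rw [one_pow, mul_one] at hmul
  apply hmul.congr'
  filter_upwards [eventually_ge_atTop (j+1)] with n hn
  have hn1 : 1 ≤ n := by omega
  have hj : j ≤ n := by omega
  have hnc := npc_pos ht hn1
  have hnsub : (0:ℝ) < ((n - j : ℕ):ℝ) := by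
    have : 0 < n - j := by omega
    exact_mod_cast this
  have hnR : (0:ℝ) < (n:ℝ) := by exact_mod_cast hn1
  rw [div_pow, div_pow, rpow_ct hn1 ht, div_mul_div_comm,
    mul_comm (((mf t lam n - j : ℕ):ℝ) ^ t) ((n:ℝ) ^ (t-1)),
    mul_div_mul_left _ _ (ne_of_gt (pow_pos hnR (t-1)))]
end asymp

section asymp2
variable {t : ℕ} {lam : ℝ}

lemma rho_tendsto (ht : 2 ≤ t) (hlam : 0 < lam) :
    Tendsto (fun n : ℕ => ((mf t lam n : ℕ):ℝ) ^ t / (n:ℝ) ^ (t - 1)) atTop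
      (nhds (lam ^ t)) := by
  have := factor_tendsto ht hlam 0
  simpa using this

lemma mf_div_n_tendsto_zero (ht : 2 ≤ t) (hlam : 0 < lam) :
    Tendsto (fun n : ℕ => ((mf t lam n : ℕ):ℝ) / (n:ℝ)) atTop (nhds 0) := by
  have hneg : Tendsto (fun n : ℕ => (n:ℝ) ^ (-(1 - cex t))) atTop (nhds 0) :=
    (tendsto_rpow_neg_atTop (by linarith [hc_lt_one ht])).comp tendsto_natCast_atTop_atTop
  have hmul := (mf_div_tendsto ht hlam).mul hneg
  rw [mul_zero] at hmul
  apply hmul.congr'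
  filter_upwards [eventually_ge_atTop 1] with n hn
  have hnR : (0:ℝ) < (n:ℝ) := by exact_mod_cast hn
  have hnc := npc_pos ht hn
  have h1 : (n:ℝ) ^ (-(1 - cex t)) = (n:ℝ) ^ (cex t) / (n:ℝ) := by
    rw [neg_sub, Real.rpow_sub hnR, Real.rpow_one]
  rw [h1]
  field_simp

lemma mf_le_eventually (ht : 2 ≤ t) (hlam : 0 < lam) :
    ∀ᶠ n : ℕ in atTop, mf t lam n ≤ n := by
  have h := (mf_div_n_tendsto_zero ht hlam).eventually_lt_const (by norm_num : (0:ℝ) < 1)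
  filter_upwards [h, eventually_ge_atTop 1] with n hn hn1
  have hnR : (0:ℝ) < (n:ℝ) := by exact_mod_cast hn1
  rw [div_lt_one hnR] at hn
  exact_mod_cast le_of_lt hn

lemma mf_pos_eventually (ht : 2 ≤ t) (hlam : 0 < lam) :
    ∀ᶠ n : ℕ in atTop, 1 ≤ mf t lam n := by
  filter_upwards [eventually_ge_atTop 1] with n hn
  have : (0:ℝ) < lam * (n:ℝ) ^ (cex t) := by
    have := npc_pos ht hn; positivity
  have h2 : 0 < mf t lam n := Nat.ceil_pos.2 this
  omega

lemma E1_eq_eventually (ht : 2 ≤ t) (hlam : 0 < lam) (i : ℕ) :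
    ∀ᶠ n : ℕ in atTop,
      (n:ℝ) * (((mf t lam n : ℕ):ℝ)/(n:ℝ))^i
        = (((mf t lam n : ℕ):ℝ)/((n:ℝ) ^ (cex t)))^i * (n:ℝ) ^ ((1:ℝ) - (i:ℝ)/(t:ℝ)) := by
  filter_upwards [eventually_ge_atTop 1] with n hn
  have hnR : (0:ℝ) < (n:ℝ) := by exact_mod_cast hn
  have hnc := npc_pos ht hn
  have hexp : ((1:ℝ) - (i:ℝ)/(t:ℝ)) = ((1:ℝ) - (i:ℝ)) + cex t * i := by
    unfold cex
    have := htR ht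
    field_simp
    ring
  have h1 : (n:ℝ) ^ ((1:ℝ) - (i:ℝ)/(t:ℝ))
      = (n:ℝ) ^ ((1:ℝ) - (i:ℝ)) * ((n:ℝ) ^ (cex t)) ^ i := by
    rw [hexp, Real.rpow_add hnR]
    congr 1
    rw [← Real.rpow_natCast ((n:ℝ) ^ (cex t)) i, ← Real.rpow_mul (le_of_lt hnR)]
  have h2 : (n:ℝ) ^ ((1:ℝ) - (i:ℝ)) = (n:ℝ) / (n:ℝ)^i := by
    rw [Real.rpow_sub hnR, Real.rpow_one, Real.rpow_natCast]
  rw [h1, h2, div_pow, div_pow]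
  have hncne : ((n:ℝ) ^ (cex t)) ^ i ≠ 0 := by positivity
  have hnine : ((n:ℝ))^i ≠ 0 := by positivity
  field_simp

lemma E1_atTop (ht : 2 ≤ t) (hlam : 0 < lam) {i : ℕ} (hi : i < t) :
    Tendsto (fun n : ℕ => (n:ℝ) * (((mf t lam n : ℕ):ℝ)/(n:ℝ))^i) atTop atTop := by
  have hC : (0:ℝ) < lam ^ i := by positivity
  have hf := (mf_div_tendsto ht hlam).pow i
  have hexp : (0:ℝ) < 1 - (i:ℝ)/(t:ℝ) := by
    have h1 : (i:ℝ) < (t:ℝ) := by exact_mod_cast hi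
    have := htR ht
    rw [sub_pos, div_lt_one this]
    exact h1
  have hg : Tendsto (fun n : ℕ => (n:ℝ) ^ ((1:ℝ) - (i:ℝ)/(t:ℝ))) atTop atTop :=
    (tendsto_rpow_atTop hexp).comp tendsto_natCast_atTop_atTop
  have := hf.pos_mul_atTop hC hg
  exact Tendsto.congr' (Filter.EventuallyEq.symm (E1_eq_eventually ht hlam i)) this

lemma E1_zero (ht : 2 ≤ t) (hlam : 0 < lam) {i : ℕ} (hi : t < i) :
    Tendsto (fun n : ℕ => (n:ℝ) * (((mf t lam n : ℕ):ℝ)/(n:ℝ))^i) atTop (nhds 0) := by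
  have hf := (mf_div_tendsto ht hlam).pow i
  have hexp : (0:ℝ) < (i:ℝ)/(t:ℝ) - 1 := by
    have h1 : (t:ℝ) < (i:ℝ) := by exact_mod_cast hi
    have h0 := htR ht
    rw [sub_pos, lt_div_iff₀ h0]
    linarith
  have hg : Tendsto (fun n : ℕ => (n:ℝ) ^ ((1:ℝ) - (i:ℝ)/(t:ℝ))) atTop (nhds 0) := by
    have := (tendsto_rpow_neg_atTop hexp).comp
      (tendsto_natCast_atTop_atTop (R := ℝ))
    apply this.congr
    intro n
    simp only [Function.comp]
    congr 1
    ring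
  have hmul := hf.mul hg
  rw [mul_zero] at hmul
  exact Tendsto.congr' (Filter.EventuallyEq.symm (E1_eq_eventually ht hlam i)) hmul
end asymp2


lemma q_le (n m k : ℕ) (hm : m ≤ n) (hk : k ≤ n) (hn : 1 ≤ n) :
    (((n-k).choose (n-m) : ℕ):ℝ)/((n.choose (n-m) : ℕ):ℝ) ≤ ((m:ℝ)/(n:ℝ))^k := by
  have hnd : (0:ℝ) < ((n.descFactorial k : ℕ):ℝ) := by exact_mod_cast ndF_pos hk
  have hnR : (0:ℝ) < (n:ℝ) := by exact_mod_cast hn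
  rw [q_eq n m k hm hk, div_pow, div_le_div_iff₀ hnd (by positivity)]
  exact_mod_cast dFpow n m hm k

lemma q_nonneg (n s k : ℕ) :
    (0:ℝ) ≤ (((n-k).choose s : ℕ):ℝ)/((n.choose s : ℕ):ℝ) := by positivity

lemma PYle_t_lim {t : ℕ} {lam : ℝ} (ht : 2 ≤ t) (hlam : 0 < lam) :
    Tendsto (fun n : ℕ => PYle n (n - mf t lam n) t) atTop
      (nhds (Real.exp (-(lam ^ t)))) := by
  classical
  set Good : ℕ → Prop := fun n => mf t lam n ≤ n ∧ 1 ≤ n ∧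
    ((mf t lam n : ℕ):ℝ)^t/(n:ℝ)^(t-1) ≤ lam^t + 1 with hGoodDef
  set F : ℕ → ℕ → ℝ := fun n k => if Good n then
    (-1:ℝ)^k * (n.choose k : ℝ) *
      ((((n - k).choose (n - mf t lam n) : ℕ):ℝ)/((n.choose (n - mf t lam n) : ℕ):ℝ))^t
    else 0 with hFdef
  have hGood : ∀ᶠ n : ℕ in atTop, Good n := by
    have h3 := (rho_tendsto ht hlam).eventually_le_const
      (by linarith : lam^t < lam^t + 1)
    filter_upwards [mf_le_eventually ht hlam, eventually_ge_atTop 1, h3] with n h1 h2 h3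
    exact ⟨h1, h2, h3⟩
  -- the uniform bound
  have h_bound : ∀ (n : ℕ) (k : ℕ), |F n k| ≤ (lam^t+1)^k / ((Nat.factorial k : ℕ) : ℝ) := by
    intro n k
    rw [hFdef]
    simp only
    split_ifs with hg
    · obtain ⟨hm, hn1, hrho⟩ := hg
      have hnR : (0:ℝ) < (n:ℝ) := by exact_mod_cast hn1
      rcases le_or_gt k n with hk | hk
      · set q : ℝ := (((n - k).choose (n - mf t lam n) : ℕ):ℝ)/((n.choose (n - mf t lam n) : ℕ):ℝ) with hq
        have hq0 : 0 ≤ q := q_nonneg n (n - mf t lam n) k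
        have habs : |(-1:ℝ)^k * (n.choose k : ℝ) * q^t| = (n.choose k : ℝ) * q^t := by
          rw [abs_mul, abs_mul, abs_pow, abs_neg, abs_one, one_pow, one_mul,
            Nat.abs_cast, abs_pow, abs_of_nonneg hq0]
        rw [habs]
        have hqle : q ≤ (((mf t lam n : ℕ):ℝ)/(n:ℝ)) ^ k :=
          q_le n (mf t lam n) k hm hk hn1
        have hC : ((n.choose k : ℕ) : ℝ) ≤ (n:ℝ)^k/((Nat.factorial k : ℕ) : ℝ) := by
          have h1 : Nat.factorial k * n.choose k ≤ n^k := by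
            rw [← Nat.descFactorial_eq_factorial_mul_choose]
            exact Nat.descFactorial_le_pow n k
          rw [le_div_iff₀ (by positivity : (0:ℝ) < ((Nat.factorial k : ℕ) : ℝ))]
          calc ((n.choose k : ℕ) : ℝ) * ((Nat.factorial k : ℕ) : ℝ) = (Nat.factorial k * n.choose k : ℕ) := by
                push_cast; ring
            _ ≤ (((n^k : ℕ)) : ℝ) := by exact_mod_cast h1
            _ = (n:ℝ)^k := by push_cast; ring
        have hq0' : (0:ℝ) ≤ (((mf t lam n : ℕ):ℝ)/(n:ℝ)) ^ k := by positivity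
        have hkt : k + (t-1)*k = k*t := by
          obtain ⟨d, rfl⟩ : ∃ d, t = d + 1 := ⟨t-1, by omega⟩
          simp only [Nat.add_sub_cancel]
          ring
        have heq : (n:ℝ)^k/((Nat.factorial k : ℕ) : ℝ) * ((((mf t lam n : ℕ):ℝ)/(n:ℝ))^k)^t
            = (((mf t lam n : ℕ):ℝ)^t/(n:ℝ)^(t-1))^k / ((Nat.factorial k : ℕ) : ℝ) := by
          have e1 : ((((mf t lam n : ℕ):ℝ)/(n:ℝ))^k)^t
              = ((mf t lam n : ℕ):ℝ)^(k*t)/(n:ℝ)^(k*t) := by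
            rw [← pow_mul, div_pow]
          have e2 : ((((mf t lam n : ℕ):ℝ)^t/(n:ℝ)^(t-1)))^k
              = ((mf t lam n : ℕ):ℝ)^(k*t)/(n:ℝ)^((t-1)*k) := by
            rw [div_pow, ← pow_mul, ← pow_mul, Nat.mul_comm t k]
          have hnsplit : (n:ℝ)^(k*t) = (n:ℝ)^k * (n:ℝ)^((t-1)*k) := by
            rw [← pow_add, hkt]
          rw [e1, e2, hnsplit]
          have h1 : (n:ℝ)^k ≠ 0 := by positivity
          have h2 : (n:ℝ)^((t-1)*k) ≠ 0 := by positivity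
          have h3 : ((Nat.factorial k : ℕ) : ℝ) ≠ 0 := by positivity
          field_simp
        have hrho0 : (0:ℝ) ≤ ((mf t lam n : ℕ):ℝ)^t/(n:ℝ)^(t-1) := by positivity
        calc ((n.choose k : ℕ) : ℝ) * q^t
            ≤ ((n.choose k : ℕ) : ℝ) * ((((mf t lam n : ℕ):ℝ)/(n:ℝ))^k)^t := by
              apply mul_le_mul_of_nonneg_left (pow_le_pow_left₀ hq0 hqle t) (by positivity)
          _ ≤ ((n:ℝ)^k/((Nat.factorial k : ℕ) : ℝ)) * ((((mf t lam n : ℕ):ℝ)/(n:ℝ))^k)^t := by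
              apply mul_le_mul_of_nonneg_right hC (by positivity)
          _ = (((mf t lam n : ℕ):ℝ)^t/(n:ℝ)^(t-1))^k / ((Nat.factorial k : ℕ) : ℝ) := heq
          _ ≤ (lam^t+1)^k / ((Nat.factorial k : ℕ) : ℝ) := by
              exact (div_le_div_iff_of_pos_right (by positivity)).2 (pow_le_pow_left₀ hrho0 hrho k)
      · rw [Nat.choose_eq_zero_of_lt hk]
        simp only [Nat.cast_zero, mul_zero, zero_mul, abs_zero]
        positivity
    · simp only [abs_zero]
      positivity
  -- pointwise limits
  have h_lim : ∀ k : ℕ, Tendsto (fun n => F n k) atTop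
      (nhds ((-1:ℝ)^k / ((Nat.factorial k : ℕ) : ℝ) * (lam^t)^k)) := by
    intro k
    have hprod : Tendsto (fun n : ℕ => ∏ j ∈ Finset.range k,
        (((mf t lam n - j : ℕ):ℝ)^t / ((n - j : ℕ):ℝ)^(t-1))) atTop
        (nhds (∏ _j ∈ Finset.range k, lam^t)) :=
      tendsto_finset_prod _ (fun j _ => factor_tendsto ht hlam j)
    rw [Finset.prod_const, Finset.card_range] at hprod
    have hG := hprod.const_mul ((-1:ℝ)^k / ((Nat.factorial k : ℕ) : ℝ))
    apply hG.congr'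
    filter_upwards [hGood, (mf_tendsto_atTop ht hlam).eventually_ge_atTop k,
      eventually_ge_atTop (k+1)] with n hg hkm hkn
    have hk : k ≤ n := by omega
    have hm := hg.1
    have hndF : (0:ℝ) < ((n.descFactorial k : ℕ):ℝ) := by exact_mod_cast ndF_pos hk
    have hkfac : (0:ℝ) < ((Nat.factorial k : ℕ) : ℝ) := by positivity
    have hchoose : ((n.choose k : ℕ):ℝ) = ((n.descFactorial k : ℕ):ℝ) / ((Nat.factorial k : ℕ) : ℝ) := by
      rw [eq_div_iff (ne_of_gt hkfac)]
      calc ((n.choose k : ℕ):ℝ) * ((Nat.factorial k : ℕ) : ℝ) = ((Nat.factorial k * n.choose k : ℕ) : ℝ) := by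
            push_cast; ring
        _ = ((n.descFactorial k : ℕ):ℝ) := by
            rw [← Nat.descFactorial_eq_factorial_mul_choose]
      -- done
    have hqe : (((n - k).choose (n - mf t lam n) : ℕ):ℝ)/((n.choose (n - mf t lam n) : ℕ):ℝ)
        = (((mf t lam n).descFactorial k : ℕ):ℝ) / ((n.descFactorial k : ℕ):ℝ) :=
      q_eq n (mf t lam n) k hm hk
    have hmprod : (((mf t lam n).descFactorial k : ℕ):ℝ)
        = ∏ j ∈ Finset.range k, ((mf t lam n - j : ℕ):ℝ) := by
      rw [Nat.descFactorial_eq_prod_range]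
      push_cast
      rfl
    have hnprod : ((n.descFactorial k : ℕ):ℝ)
        = ∏ j ∈ Finset.range k, ((n - j : ℕ):ℝ) := by
      rw [Nat.descFactorial_eq_prod_range]
      push_cast
      rfl
    have hnj : ∀ j ∈ Finset.range k, ((n - j : ℕ):ℝ) ≠ 0 := by
      intro j hj
      have : 0 < n - j := by
        have := Finset.mem_range.1 hj
        omega
      exact_mod_cast Nat.pos_iff_ne_zero.1 this
    rw [hFdef]
    simp only [if_pos hg]
    rw [hqe, hchoose]
    have hprodsplit : ∏ j ∈ Finset.range k,
        (((mf t lam n - j : ℕ):ℝ)^t / ((n - j : ℕ):ℝ)^(t-1))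
        = (((mf t lam n).descFactorial k : ℕ):ℝ)^t
          / ((n.descFactorial k : ℕ):ℝ)^(t-1) := by
      rw [hmprod, hnprod, ← Finset.prod_pow, ← Finset.prod_pow, ← Finset.prod_div_distrib]
    rw [hprodsplit]
    have ht1 : t - 1 + 1 = t := by omega
    have hpow : ((n.descFactorial k : ℕ):ℝ)^t
        = ((n.descFactorial k : ℕ):ℝ)^(t-1) * ((n.descFactorial k : ℕ):ℝ) := by
      rw [← ht1, pow_succ]
      rw [ht1]
    field_simp
    rw [← hpow, div_pow]
    field_simp
  -- identification of the partial sums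
  have h_tsum_eq : ∀ᶠ n : ℕ in atTop, (∑' k, F n k) = PYle n (n - mf t lam n) t := by
    filter_upwards [hGood] with n hg
    have hzero : ∀ k ∉ Finset.range (n+1), F n k = 0 := by
      intro k hk
      have : n < k := by
        simpa [Finset.mem_range] using hk
      rw [hFdef]
      simp [Nat.choose_eq_zero_of_lt this]
    rw [tsum_eq_sum hzero, PYle_eq_sum n (n - mf t lam n) t (Nat.sub_le n _)]
    refine Finset.sum_congr rfl fun k _ => ?_
    rw [hFdef]
    simp [if_pos hg]
  -- dominated convergence
  have hdom := tendsto_tsum_of_dominated_convergence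
    (Real.summable_pow_div_factorial (lam^t+1)) h_lim
    (Filter.Eventually.of_forall h_bound)
  have hval : (∑' k : ℕ, (-1:ℝ)^k / ((Nat.factorial k : ℕ) : ℝ) * (lam^t)^k) = Real.exp (-(lam^t)) := by
    have h1 : ∀ k : ℕ, (-1:ℝ)^k / ((Nat.factorial k : ℕ) : ℝ) * (lam^t)^k = (-(lam^t))^k / ((Nat.factorial k : ℕ) : ℝ) := by
      intro k
      rw [neg_pow]
      ring
    rw [tsum_congr h1]
    rw [Real.exp_eq_exp_ℝ, NormedSpace.exp_eq_tsum_div]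
  rw [← hval]
  exact hdom.congr' h_tsum_eq


lemma pr_nonneg (n s i : ℕ) (p : (Fin i → Finset (Fin n)) → Prop) :
    0 ≤ pr n s i p := by
  unfold pr
  positivity

lemma PYle_compl (n s i : ℕ) (hs : s ≤ n) :
    PYle n s i = 1 - pr n s i (fun f => ¬ collected f) := by
  classical
  have hN : (0:ℝ) < ((draws n s i).card : ℝ) := by
    rw [draws_card]
    have := Nat.choose_pos hs
    positivity
  have hone : ∀ f : Fin i → Finset (Fin n),
      (if collected f then (1:ℝ) else 0) + (if ¬ collected f then (1:ℝ) else 0) = 1 := by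
    intro f; by_cases h : collected f <;> simp [h]
  have hsum : (((draws n s i).filter (fun f => collected f)).card : ℝ)
      + (((draws n s i).filter (fun f => ¬ collected f)).card : ℝ)
      = ((draws n s i).card : ℝ) := by
    rw [← Finset.sum_boole, ← Finset.sum_boole, ← Finset.sum_add_distrib]
    rw [Finset.sum_congr rfl (fun f _ => hone f), Finset.sum_const, nsmul_eq_mul, mul_one]
  unfold PYle pr
  rw [Finset.filter_congr_decidable, Finset.filter_congr_decidable]
  rw [eq_sub_iff_add_eq, ← add_div, div_eq_one_iff_eq (ne_of_gt hN)]
  convert hsum using 6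

lemma PYle_lt_lim {t : ℕ} {lam : ℝ} (ht : 2 ≤ t) (hlam : 0 < lam) {i : ℕ} (hi : i < t) :
    Tendsto (fun n : ℕ => PYle n (n - mf t lam n) i) atTop (nhds 0) := by
  have hE := E1_atTop ht hlam hi
  have hEadd : Tendsto (fun n : ℕ => 1 + (n:ℝ) * (((mf t lam n : ℕ):ℝ)/(n:ℝ))^i)
      atTop atTop := tendsto_atTop_add_const_left _ 1 hE
  have hup : Tendsto (fun n : ℕ =>
      1 / (1 + (n:ℝ) * (((mf t lam n : ℕ):ℝ)/(n:ℝ))^i)) atTop (nhds 0) := by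
    have := tendsto_inv_atTop_zero.comp hEadd
    simpa [one_div, Function.comp_def] using this
  apply tendsto_of_tendsto_of_tendsto_of_le_of_le' tendsto_const_nhds hup
  · exact Filter.Eventually.of_forall fun n => pr_nonneg n _ i _
  · filter_upwards [mf_le_eventually ht hlam, mf_pos_eventually ht hlam,
      eventually_ge_atTop 2] with n h1 h2 h3
    exact secmom_bound n (mf t lam n) i h1 h2 h3

lemma PYle_gt_lim {t : ℕ} {lam : ℝ} (ht : 2 ≤ t) (hlam : 0 < lam) {i : ℕ} (hi : t < i) :
    Tendsto (fun n : ℕ => PYle n (n - mf t lam n) i) atTop (nhds 1) := by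
  have hnot : Tendsto (fun n : ℕ => pr n (n - mf t lam n) i (fun f => ¬ collected f))
      atTop (nhds 0) := by
    apply tendsto_of_tendsto_of_tendsto_of_le_of_le' tendsto_const_nhds
      (E1_zero ht hlam hi)
    · exact Filter.Eventually.of_forall fun n => pr_nonneg n _ i _
    · filter_upwards [mf_le_eventually ht hlam, eventually_ge_atTop 1] with n h1 h2
      exact markov_bound n (mf t lam n) i h1 h2
  have h1 : Tendsto (fun n : ℕ =>
      1 - pr n (n - mf t lam n) i (fun f => ¬ collected f)) atTop (nhds (1 - 0)) :=
    tendsto_const_nhds.sub hnot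
  rw [sub_zero] at h1
  apply h1.congr
  intro n
  exact (PYle_compl n (n - mf t lam n) i (Nat.sub_le n _)).symm


end CouponCC

open CouponCC

/-- Case III: with `s(n) = n − ⌈λ n^{(t−1)/t}⌉`, the collection time `Y_n` converges in
distribution to `Z` with `P(Z = t) = e^{−λ^t}`, `P(Z = t+1) = 1 − e^{−λ^t}`. -/
theorem stmt14 (t : ℕ) (ht : 2 ≤ t) (lam : ℝ) (hlam : 0 < lam) :
    ∀ i : ℕ,
      Tendsto
        (fun n : ℕ => PYeq n (n - ⌈lam * (n : ℝ) ^ (((t : ℝ) - 1) / (t : ℝ))⌉₊) i)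
        atTop
        (nhds (if i = t then Real.exp (-(lam ^ t))
               else if i = t + 1 then 1 - Real.exp (-(lam ^ t)) else 0)) := by
  intro i
  have master : ∀ j : ℕ, Tendsto (fun n : ℕ => PYle n (n - mf t lam n) j) atTop
      (nhds (if j < t then 0 else if j = t then Real.exp (-(lam^t)) else 1)) := by
    intro j
    rcases lt_trichotomy j t with h|h|h
    · rw [if_pos h]; exact PYle_lt_lim ht hlam h
    · subst h; rw [if_neg (lt_irrefl _), if_pos rfl]; exact PYle_t_lim ht hlam
    · rw [if_neg (by omega), if_neg (by omega)]; exact PYle_gt_lim ht hlam h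
  have hfun : (fun n : ℕ => PYeq n (n - ⌈lam * (n : ℝ) ^ (((t : ℝ) - 1) / (t : ℝ))⌉₊) i)
      = fun n : ℕ => PYle n (n - mf t lam n) i
        - if i = 0 then 0 else PYle n (n - mf t lam n) (i-1) := rfl
  rw [hfun]
  by_cases h0 : i = 0
  · subst h0
    simp only [if_pos rfl]
    have h := master 0
    rw [if_pos (by omega)] at h
    have h2 : Tendsto (fun n : ℕ => PYle n (n - mf t lam n) 0 - 0) atTop (nhds 0) := by
      simpa using h
    have hv : (if (0:ℕ) = t then Real.exp (-(lam ^ t))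
        else if (0:ℕ) = t + 1 then 1 - Real.exp (-(lam ^ t)) else (0:ℝ)) = 0 := by
      rw [if_neg (by omega), if_neg (by omega)]
    rw [hv]
    exact h2
  · simp only [if_neg h0]
    have h := (master i).sub (master (i-1))
    have hv : (if i = t then Real.exp (-(lam ^ t))
        else if i = t + 1 then 1 - Real.exp (-(lam ^ t)) else (0:ℝ))
        = (if i < t then 0 else if i = t then Real.exp (-(lam^t)) else 1)
          - (if i-1 < t then 0 else if i-1 = t then Real.exp (-(lam^t)) else 1) := by
      rcases lt_trichotomy i t with h1|h1|h1
      · rw [if_neg (by omega), if_neg (by omega), if_pos h1, if_pos (by omega)]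
        norm_num
      · subst h1
        rw [if_pos rfl, if_neg (lt_irrefl _), if_pos rfl, if_pos (by omega)]
        norm_num
      · by_cases h2 : i = t + 1
        · subst h2
          rw [if_neg (by omega), if_pos rfl, if_neg (by omega), if_neg (by omega),
            if_neg (by omega), if_pos (by omega)]
        · rw [if_neg (by omega), if_neg h2, if_neg (by omega), if_neg (by omega),
            if_neg (by omega), if_neg (by omega)]
          norm_num
    rw [hv]
    exact h
end

section
/- Let t ≥ 1 be an integer and suppose s(n) satisfies n − s(n) = o(n^{t/(t+1)}) and n − s(n) = ω(n^{(t−1)/t}). If Y_n denotes the number of uniform s(n)-subset draws needed to collect all n coupons, then Y_n converges in probability to t+1 and lim_{n→∞} E[Y_n] = t+1. -/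
open Finset Filter
open scoped Classical

/- ### Auxiliary counting lemmas -/

lemma prod_count {n : ℕ} (i : ℕ) (q : Finset (Fin n) → Prop) [DecidablePred q]
    [DecidablePred (fun f : Fin i → Finset (Fin n) => ∀ j, q (f j))] :
    ((Finset.univ : Finset (Fin i → Finset (Fin n))).filter (fun f => ∀ j, q (f j))).card
      = ((Finset.univ : Finset (Finset (Fin n))).filter q).card ^ i := by
  rw [← Fintype.card_subtype, ← Fintype.card_subtype]
  rw [Fintype.card_congr (Equiv.subtypePiEquivPi (p := fun _ b => q b)),
    Fintype.card_pi]
  simp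

lemma count_subsets {n s : ℕ} (T : Finset (Fin n))
    [DecidablePred (fun A : Finset (Fin n) => A.card = s ∧ A ⊆ T)] :
    ((Finset.univ : Finset (Finset (Fin n))).filter (fun A => A.card = s ∧ A ⊆ T)).card
      = T.card.choose s := by
  rw [← Finset.card_powersetCard]
  congr 1
  ext A
  simp [Finset.mem_powersetCard, and_comm]

lemma count_avoid (n s i : ℕ) (c : Fin n) :
    ((draws n s i).filter (fun f => ∀ j, c ∉ f j)).card = ((n-1).choose s) ^ i := by
  rw [draws, Finset.filter_filter]
  have h : ∀ f : Fin i → Finset (Fin n),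
      ((∀ j, (f j).card = s) ∧ ∀ j, c ∉ f j) ↔
        ∀ j, (f j).card = s ∧ f j ⊆ Finset.univ.erase c := by
    intro f
    simp only [Finset.subset_erase, Finset.subset_univ, true_and, forall_and]
  rw [Finset.filter_congr (fun f _ => h f)]
  refine (prod_count i (fun A => A.card = s ∧ A ⊆ Finset.univ.erase c)).trans ?_
  rw [count_subsets, Finset.card_erase_of_mem (Finset.mem_univ c), Finset.card_univ,
    Fintype.card_fin]

lemma count_avoid2 (n s i : ℕ) (c c' : Fin n) (hcc : c ≠ c') :
    ((draws n s i).filter (fun f => ∀ j, c ∉ f j ∧ c' ∉ f j)).card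
      = ((n-2).choose s) ^ i := by
  rw [draws, Finset.filter_filter]
  have h : ∀ f : Fin i → Finset (Fin n),
      ((∀ j, (f j).card = s) ∧ ∀ j, c ∉ f j ∧ c' ∉ f j) ↔
        ∀ j, (f j).card = s ∧ f j ⊆ (Finset.univ.erase c).erase c' := by
    intro f
    simp only [Finset.subset_erase, Finset.subset_univ, true_and, forall_and]
  rw [Finset.filter_congr (fun f _ => h f)]
  refine (prod_count i (fun A => A.card = s ∧ A ⊆ (Finset.univ.erase c).erase c')).trans ?_
  rw [count_subsets, Finset.card_erase_of_mem (Finset.mem_erase.2 ⟨hcc.symm, Finset.mem_univ c'⟩),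
    Finset.card_erase_of_mem (Finset.mem_univ c), Finset.card_univ, Fintype.card_fin]
  norm_num [Nat.sub_sub]

/- ### Binomial coefficient identities -/

lemma choose_id1 (n s : ℕ) : (n - s) * n.choose s = n * (n-1).choose s := by
  cases n with
  | zero => simp
  | succ k =>
    have h1 := Nat.add_one_mul_choose_eq k s
    have h2 := Nat.choose_succ_right_eq (k+1) s
    simp only [Nat.succ_eq_add_one, Nat.add_sub_cancel] at *
    rw [mul_comm]
    omega

lemma choose_id2 (n s : ℕ) (hs : s ≤ n) :
    n * (n-1) * (n-2).choose s = (n - s) * (n - s - 1) * n.choose s := by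
  rcases Nat.lt_or_ge s n with h | h
  · have h1 := choose_id1 n s
    have h2 := choose_id1 (n-1) s
    have e : n - 1 - s = n - s - 1 := by omega
    rw [e] at h2
    calc n * (n-1) * (n-2).choose s
        = n * ((n-1) * (n-1-1).choose s) := by rw [mul_assoc, show n-2 = n-1-1 from by omega]
      _ = n * ((n - s - 1) * (n-1).choose s) := by rw [← h2]
      _ = (n - s - 1) * (n * (n-1).choose s) := by ring
      _ = (n - s - 1) * ((n - s) * n.choose s) := by rw [← h1]
      _ = (n - s) * (n - s - 1) * n.choose s := by ring
  · have hsn : s = n := le_antisymm hs h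
    rcases Nat.eq_zero_or_pos n with hn | hn
    · simp [hsn, hn]
    · rw [hsn, Nat.choose_eq_zero_of_lt (show n - 2 < n by omega), Nat.sub_self]
      simp

lemma key_nat_ineq (n s i : ℕ) (hs : s ≤ n) :
    n * (n-1) * ((n-2).choose s) ^ i * n ^ (2*i)
      ≤ n^2 * (n - s)^(2*i) * (n.choose s) ^ i := by
  rcases Nat.eq_zero_or_pos (n * (n-1)) with hu | hu
  · rw [show n * (n-1) * ((n-2).choose s)^i * n^(2*i)
      = (n*(n-1)) * (((n-2).choose s)^i * n^(2*i)) from by ring, hu, zero_mul]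
    exact Nat.zero_le _
  · apply Nat.le_of_mul_le_mul_right (c := (n*(n-1))^i) _ (pow_pos hu i)
    have key : (n*(n-1)) ^ i * ((n-2).choose s) ^ i = ((n-s)*(n-s-1))^i * (n.choose s)^i := by
      rw [← mul_pow, ← mul_pow, choose_id2 n s hs]
    have hv : (n-s)*(n-s-1) * n^2 ≤ (n-s)^2 * (n * (n-1)) := by
      have hstep : (n - s - 1) * n ≤ (n-s) * (n-1) := by
        rw [Nat.sub_one_mul, Nat.mul_sub_one]
        exact Nat.sub_le_sub_left (Nat.sub_le n s) _
      calc (n-s)*(n-s-1) * n^2 = (n-s) * n * ((n-s-1) * n) := by ring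
        _ ≤ (n-s) * n * ((n-s) * (n-1)) := Nat.mul_le_mul_left _ hstep
        _ = (n-s)^2 * (n * (n-1)) := by ring
    calc n * (n-1) * ((n-2).choose s) ^ i * n ^ (2*i) * (n*(n-1))^i
        = (n * (n-1)) * (((n*(n-1))^i * ((n-2).choose s) ^ i) * n ^ (2*i)) := by ring
      _ = (n * (n-1)) * (((n-s)*(n-s-1))^i * (n.choose s)^i * n ^ (2*i)) := by rw [key]
      _ = (n * (n-1)) * (((n-s)*(n-s-1) * n^2)^i * (n.choose s)^i) := by
          simp only [mul_pow, pow_mul]; ring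
      _ ≤ (n^2) * (((n-s)^2 * (n*(n-1)))^i * (n.choose s)^i) := by
          apply Nat.mul_le_mul (by nlinarith [Nat.sub_le n 1])
          exact Nat.mul_le_mul_right _ (Nat.pow_le_pow_left hv i)
      _ = n^2 * (n - s)^(2*i) * (n.choose s) ^ i * (n*(n-1))^i := by
          simp only [mul_pow, pow_mul]; ring

lemma cast_choose_id1 (n s : ℕ) :
    (((n-1).choose s : ℕ) : ℝ) * n = ((n - s : ℕ) : ℝ) * (n.choose s : ℝ) := by
  have h : (((n - s) * n.choose s : ℕ) : ℝ) = ((n * (n-1).choose s : ℕ) : ℝ) := by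
    exact_mod_cast congrArg (Nat.cast : ℕ → ℝ) (choose_id1 n s)
  push_cast at h
  linarith

/- ### First and second moment computations -/

lemma my_boole_mul (p q : Prop) [Decidable p] [Decidable q] [Decidable (p ∧ q)] :
    (if p then (1:ℕ) else 0) * (if q then 1 else 0) = if p ∧ q then 1 else 0 := by
  split_ifs <;> simp_all

lemma sum_missed (n s i : ℕ) :
    ∑ f ∈ draws n s i, missed f = n * ((n-1).choose s) ^ i := by
  simp only [missed, Finset.card_filter]
  rw [Finset.sum_comm]
  rw [Finset.sum_congr rfl (fun c _ => (Finset.card_filter _ _).symm)]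
  rw [Finset.sum_congr rfl (fun c _ => count_avoid n s i c)]
  simp [Finset.card_univ, mul_comm]

lemma sum_missed_sq (n s i : ℕ) :
    ∑ f ∈ draws n s i, (missed f)^2
      = n * ((n-1).choose s) ^ i + n * (n-1) * ((n-2).choose s) ^ i := by
  have expand : ∀ f : Fin i → Finset (Fin n), (missed f)^2
      = ∑ c : Fin n, ∑ c' : Fin n, (if (∀ j, c ∉ f j) ∧ (∀ j, c' ∉ f j) then 1 else 0) := by
    intro f
    rw [missed, Finset.card_filter, sq, Finset.sum_mul_sum]
    exact Finset.sum_congr rfl fun c _ => Finset.sum_congr rfl fun c' _ => my_boole_mul _ _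
  rw [Finset.sum_congr rfl (fun f _ => expand f), Finset.sum_comm]
  have inner : ∀ c : Fin n,
      ∑ f ∈ draws n s i, ∑ c' : Fin n, (if (∀ j, c ∉ f j) ∧ (∀ j, c' ∉ f j) then (1:ℕ) else 0)
        = ((n-1).choose s) ^ i + (n-1) * ((n-2).choose s) ^ i := by
    intro c
    rw [Finset.sum_comm]
    have hF : ∀ c' : Fin n, c ≠ c' →
        ∑ f ∈ draws n s i, (if (∀ j, c ∉ f j) ∧ (∀ j, c' ∉ f j) then (1:ℕ) else 0)
          = ((n-2).choose s) ^ i := by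
      intro c' hcc
      rw [← Finset.card_filter]
      rw [← count_avoid2 n s i c c' hcc]
      congr 1
      apply Finset.filter_congr
      intro f _
      constructor
      · rintro ⟨h1, h2⟩ j; exact ⟨h1 j, h2 j⟩
      · intro h; exact ⟨fun j => (h j).1, fun j => (h j).2⟩
    have hFd : ∑ f ∈ draws n s i, (if (∀ j, c ∉ f j) ∧ (∀ j, c ∉ f j) then (1:ℕ) else 0)
        = ((n-1).choose s) ^ i := by
      rw [← Finset.card_filter, ← count_avoid n s i c]
      congr 1
      apply Finset.filter_congr
      intro f _
      simp
    rw [← Finset.add_sum_erase _ _ (Finset.mem_univ c), hFd]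
    congr 1
    rw [Finset.sum_congr rfl (fun c' hc' => hF c' (Finset.ne_of_mem_erase hc').symm)]
    rw [Finset.sum_const, Finset.card_erase_of_mem (Finset.mem_univ c), Finset.card_univ,
      Fintype.card_fin, smul_eq_mul]
  rw [Finset.sum_congr rfl (fun c _ => inner c)]
  rw [Finset.sum_const, Finset.card_univ, Fintype.card_fin, smul_eq_mul]
  ring

/- ### The event of not having collected everything -/

noncomputable def Fset (n s i : ℕ) : Finset (Fin i → Finset (Fin n)) :=
  (draws n s i).filter (fun f => ¬ collected f)

lemma not_collected_iff {n i : ℕ} (f : Fin i → Finset (Fin n)) :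
    ¬ collected f ↔ 1 ≤ missed f := by
  rw [collected, missed]
  push_neg
  rw [Nat.one_le_iff_ne_zero, Ne, Finset.card_eq_zero, ← Ne, ← Finset.nonempty_iff_ne_empty]
  simp [Finset.filter_nonempty_iff]

lemma sum_missed_filter (n s i : ℕ) :
    ∑ f ∈ Fset n s i, missed f = ∑ f ∈ draws n s i, missed f := by
  apply Finset.sum_filter_of_ne
  intro f _ hf
  rw [not_collected_iff]
  omega

lemma card_Fset_le (n s i : ℕ) :
    (Fset n s i).card ≤ n * ((n-1).choose s) ^ i := by
  have h1 : (Fset n s i).card ≤ ∑ f ∈ Fset n s i, missed f := by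
    rw [Finset.card_eq_sum_ones]
    exact Finset.sum_le_sum fun f hf =>
      (not_collected_iff f).1 (Finset.mem_filter.1 hf).2
  have h2 := sum_missed_filter n s i
  have h3 := sum_missed n s i
  omega

lemma pr_eq_M (n s i : ℕ) :
    pr n s i (fun f => ¬ collected f)
      = ((Fset n s i).card : ℝ) / ((n.choose s : ℕ) : ℝ)^i := by
  rw [pr, card_draws, Fset]
  push_cast
  congr!

lemma pr_nonneg (n s i : ℕ) (p : (Fin i → Finset (Fin n)) → Prop) : 0 ≤ pr n s i p := by
  unfold pr; positivity

lemma pr_le_one (n s i : ℕ) (p : (Fin i → Finset (Fin n)) → Prop) : pr n s i p ≤ 1 := by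
  unfold pr
  rcases Nat.eq_zero_or_pos (draws n s i).card with h | h
  · simp [h]
  · rw [div_le_one (by exact_mod_cast h)]
    exact_mod_cast Finset.card_filter_le _ _

lemma pr_compl (n s i : ℕ) (hs : s ≤ n) (p : (Fin i → Finset (Fin n)) → Prop) :
    pr n s i p = 1 - pr n s i (fun f => ¬ p f) := by
  have hN : 0 < ((draws n s i).card : ℝ) := by
    rw [card_draws]
    exact_mod_cast pow_pos (Nat.choose_pos hs) i
  have hc := Finset.card_filter_add_card_filter_not (s := draws n s i) (p := p)
  rw [pr, pr, eq_sub_iff_add_eq, ← add_div, div_eq_one_iff_eq hN.ne']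
  norm_cast
  convert hc

lemma PYle_eq (n s i : ℕ) (hs : s ≤ n) :
    PYle n s i = 1 - pr n s i (fun f => ¬ collected f) := by
  rw [PYle]
  exact pr_compl n s i hs _

/- ### Probability bounds -/

lemma pr_upper (n s i : ℕ) (hn : 0 < n) (hs : s ≤ n) :
    pr n s i (fun f => ¬ collected f)
      ≤ (n : ℝ) * (((n - s : ℕ) : ℝ) / (n : ℝ)) ^ i := by
  have hn' : (0:ℝ) < (n:ℝ) := by exact_mod_cast hn
  have hC0 : (0:ℝ) < ((n.choose s : ℕ) : ℝ) := by exact_mod_cast Nat.choose_pos hs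
  rw [pr_eq_M, div_le_iff₀ (by positivity)]
  have h1 : (((Fset n s i).card : ℕ) : ℝ) ≤ ((n * ((n-1).choose s)^i : ℕ) : ℝ) := by
    exact_mod_cast card_Fset_le n s i
  refine h1.trans (le_of_eq ?_)
  have e : (((n-1).choose s : ℕ) : ℝ) = ((n - s : ℕ) : ℝ) / (n : ℝ) * ((n.choose s : ℕ) : ℝ) := by
    rw [div_mul_eq_mul_div, eq_div_iff hn'.ne']
    exact cast_choose_id1 n s
  calc ((n * ((n-1).choose s)^i : ℕ) : ℝ)
      = (n : ℝ) * (((n-1).choose s : ℕ) : ℝ)^i := by push_cast; ring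
    _ = (n : ℝ) * ((((n - s : ℕ) : ℝ) / (n : ℝ)) * ((n.choose s : ℕ) : ℝ))^i := by rw [← e]
    _ = (n : ℝ) * (((n - s : ℕ) : ℝ) / (n : ℝ))^i * ((n.choose s : ℕ) : ℝ)^i := by
        rw [mul_pow]; ring

lemma pr_lower (n s i : ℕ) (hn : 0 < n) (hs : s ≤ n) (hm : 0 < n - s) :
    1 - 1/(1 + (n : ℝ) * (((n - s : ℕ) : ℝ) / (n : ℝ)) ^ i)
      ≤ pr n s i (fun f => ¬ collected f) := by
  have hn' : (0:ℝ) < (n:ℝ) := by exact_mod_cast hn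
  have hmr : (0:ℝ) < ((n - s : ℕ) : ℝ) := by exact_mod_cast hm
  have hC0 : (0:ℝ) < ((n.choose s : ℕ) : ℝ) := by exact_mod_cast Nat.choose_pos hs
  set q : ℝ := ((n - s : ℕ) : ℝ) / (n : ℝ) with hqdef
  have hq0 : 0 < q := div_pos hmr hn'
  set a : ℝ := (n : ℝ) * q ^ i with hadef
  have ha : 0 < a := by positivity
  set A : ℝ := ((n * ((n-1).choose s)^i : ℕ) : ℝ) with hAdef
  set B : ℝ := ((n * (n-1) * ((n-2).choose s)^i : ℕ) : ℝ) with hBdef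
  have hA0 : (0:ℝ) < A := by
    rw [hAdef]
    exact_mod_cast Nat.mul_pos hn (pow_pos (Nat.choose_pos (by omega : s ≤ n - 1)) i)
  have hB0 : (0:ℝ) ≤ B := by rw [hBdef]; positivity
  set Mr : ℝ := (((Fset n s i).card : ℕ) : ℝ) with hMdef
  have hM0 : (0:ℝ) ≤ Mr := by rw [hMdef]; positivity
  set N : ℝ := ((n.choose s : ℕ) : ℝ) ^ i with hNdef
  have hN : (0:ℝ) < N := by rw [hNdef]; positivity
  -- Cauchy–Schwarz
  have hsum1 : ∑ f ∈ Fset n s i, missed f = n * ((n-1).choose s)^i :=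
    (sum_missed_filter n s i).trans (sum_missed n s i)
  have hsum2 : ∑ f ∈ Fset n s i, (missed f)^2
      ≤ n * ((n-1).choose s)^i + n*(n-1)*((n-2).choose s)^i := by
    rw [← sum_missed_sq n s i]
    exact Finset.sum_le_sum_of_subset (Finset.filter_subset _ _)
  have hCS : A^2 ≤ Mr * (A + B) := by
    have h0 : (∑ f ∈ Fset n s i, (missed f : ℝ))^2
        ≤ ((Fset n s i).card : ℝ) * ∑ f ∈ Fset n s i, (missed f : ℝ)^2 :=
      sq_sum_le_card_mul_sum_sq
    have e1 : ∑ f ∈ Fset n s i, (missed f : ℝ) = A := by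
      rw [hAdef, ← hsum1]
      push_cast
      rfl
    have e2 : ∑ f ∈ Fset n s i, (missed f : ℝ)^2 ≤ A + B := by
      have hc : ((∑ f ∈ Fset n s i, (missed f)^2 : ℕ) : ℝ)
          ≤ ((n * ((n-1).choose s)^i + n*(n-1)*((n-2).choose s)^i : ℕ) : ℝ) := by
        exact_mod_cast hsum2
      rw [hAdef, hBdef]
      push_cast at hc ⊢
      linarith
    calc A^2 = (∑ f ∈ Fset n s i, (missed f : ℝ))^2 := by rw [e1]
      _ ≤ ((Fset n s i).card : ℝ) * ∑ f ∈ Fset n s i, (missed f : ℝ)^2 := h0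
      _ ≤ Mr * (A + B) := by
          rw [hMdef]
          push_cast
          exact mul_le_mul_of_nonneg_left e2 (by positivity)
  -- identities
  have r1 : (((n-1).choose s : ℕ) : ℝ) * n = ((n - s : ℕ) : ℝ) * ((n.choose s : ℕ) : ℝ) :=
    cast_choose_id1 n s
  have keyr : (((n-1).choose s : ℕ) : ℝ)^i * (n:ℝ)^i
      = ((n - s : ℕ) : ℝ)^i * ((n.choose s : ℕ) : ℝ)^i := by
    rw [← mul_pow, r1, mul_pow]
  have hAa : A = a * N := by
    have keyr2 := keyr
    rw [Nat.cast_sub hs] at keyr2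
    rw [hAdef, hadef, hNdef, hqdef, div_pow]
    push_cast
    field_simp
    linear_combination keyr
  have hBa : B ≤ a * A := by
    have hkey : B * (n:ℝ)^(2*i)
        ≤ (n:ℝ)^2 * ((n - s : ℕ) : ℝ)^(2*i) * ((n.choose s : ℕ) : ℝ)^i := by
      rw [hBdef]
      exact_mod_cast key_nat_ineq n s i hs
    have e : a * A * (n:ℝ)^(2*i)
        = (n:ℝ)^2 * ((n - s : ℕ) : ℝ)^(2*i) * ((n.choose s : ℕ) : ℝ)^i := by
      rw [hAa, hadef, hNdef, hqdef, div_pow, two_mul i, pow_add, pow_add]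
      field_simp
    have := hkey.trans_eq e.symm
    exact le_of_mul_le_mul_right this (by positivity)
  have hMain : A ≤ Mr * (1 + a) := by
    have h2 : A * A ≤ (Mr * (1+a)) * A := by
      calc A * A = A^2 := by ring
        _ ≤ Mr * (A + B) := hCS
        _ ≤ Mr * (A + a*A) := mul_le_mul_of_nonneg_left (by linarith) hM0
        _ = (Mr * (1+a)) * A := by ring
    exact le_of_mul_le_mul_right h2 hA0
  -- conclude
  rw [pr_eq_M]
  have goal_eq : 1 - 1/(1+a) = a/(1+a) := by
    field_simp
    ring
  rw [goal_eq]
  rw [div_le_div_iff₀ (by linarith) hN]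
  calc a * N = A := hAa.symm
    _ ≤ Mr * (1+a) := hMain

/- ### The main theorem -/

set_option maxHeartbeats 1600000 in
/-- Case III(b): if `n − s(n) = o(n^{t/(t+1)})` and `n − s(n) = ω(n^{(t−1)/t})`, then
`Y_n → t+1` in probability and `E[Y_n] → t+1`. -/
theorem stmt16 (t : ℕ) (ht : 1 ≤ t) (s : ℕ → ℕ) (hs : ∀ n, s n ≤ n)
    (hsmall : Tendsto
      (fun n : ℕ => ((n - s n : ℕ) : ℝ) / (n : ℝ) ^ ((t : ℝ) / ((t : ℝ) + 1)))
      atTop (nhds 0))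
    (hbig : Tendsto
      (fun n : ℕ => ((n - s n : ℕ) : ℝ) / (n : ℝ) ^ (((t : ℝ) - 1) / (t : ℝ)))
      atTop atTop) :
    Tendsto (fun n : ℕ => PYeq n (s n) (t + 1)) atTop (nhds 1) ∧
      Tendsto (fun n : ℕ => EY n (s n)) atTop (nhds ((t : ℝ) + 1)) := by
  have ht' : (0:ℝ) < (t:ℝ) := by exact_mod_cast ht
  -- eventually `n - s n ≥ 1`
  have hev_m : ∀ᶠ n : ℕ in atTop, 1 ≤ n - s n := by
    filter_upwards [hbig.eventually_ge_atTop 1, eventually_ge_atTop 1] with n h hn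
    by_contra hc
    push_neg at hc
    have h0 : n - s n = 0 := by omega
    rw [h0] at h
    norm_num at h
  -- q → 0
  have hq_tendsto : Tendsto (fun n : ℕ => ((n - s n : ℕ) : ℝ) / (n : ℝ)) atTop (nhds 0) := by
    apply squeeze_zero' (t₀ := atTop)
    · filter_upwards [eventually_ge_atTop 1] with n hn
      positivity
    · filter_upwards [eventually_ge_atTop 1] with n hn
      have hn' : (1:ℝ) ≤ (n:ℝ) := by exact_mod_cast hn
      have hle : (n:ℝ) ^ ((t : ℝ) / ((t : ℝ) + 1)) ≤ (n:ℝ) := by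
        nth_rewrite 2 [show (n:ℝ) = (n:ℝ) ^ (1:ℝ) from (Real.rpow_one _).symm]
        apply Real.rpow_le_rpow_of_exponent_le hn'
        rw [div_le_one (by linarith)]
        linarith
      have hpos : (0:ℝ) < (n:ℝ) ^ ((t : ℝ) / ((t : ℝ) + 1)) := by
        apply Real.rpow_pos_of_pos
        linarith
      exact div_le_div_of_nonneg_left (by positivity) hpos hle
    · exact hsmall
  have hq_half : ∀ᶠ n : ℕ in atTop, ((n - s n : ℕ) : ℝ) / (n : ℝ) ≤ 1/2 :=
    (hq_tendsto.eventually_lt_const (by norm_num : (0:ℝ) < 1/2)).mono fun n h => h.le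
  -- a_{t} → ∞
  have key_exp0 : ∀ᶠ n : ℕ in atTop,
      (((n - s n : ℕ) : ℝ) / (n : ℝ) ^ (((t : ℝ) - 1) / (t : ℝ)))^t
        = (n:ℝ) * (((n - s n : ℕ) : ℝ) / (n : ℝ))^t := by
    filter_upwards [eventually_ge_atTop 1] with n hn
    have hn' : (0:ℝ) < (n:ℝ) := by exact_mod_cast hn
    have h1 : ((n:ℝ) ^ (((t : ℝ) - 1) / (t : ℝ)))^t = (n:ℝ)^(t-1 : ℕ) := by
      rw [← Real.rpow_natCast ((n:ℝ) ^ (((t : ℝ) - 1) / (t : ℝ))) t, ← Real.rpow_mul hn'.le]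
      rw [div_mul_cancel₀ _ (by positivity : (t:ℝ) ≠ 0)]
      rw [show ((t:ℝ) - 1) = ((t - 1 : ℕ) : ℝ) from by push_cast [Nat.cast_sub ht]; ring]
      exact Real.rpow_natCast _ _
    rw [div_pow, div_pow, h1]
    rw [show (n:ℝ)^t = (n:ℝ)^(t-1:ℕ) * (n:ℝ) from by
      rw [← pow_succ]; congr 1; omega]
    field_simp
  have ha0 : Tendsto (fun n : ℕ => (n:ℝ) * (((n - s n : ℕ) : ℝ) / (n : ℝ))^t) atTop atTop := by
    have hb := (tendsto_pow_atTop (n := t) (by omega)).comp hbig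
    exact hb.congr' key_exp0
  -- a_{t+1} → 0
  have key_exp1 : ∀ᶠ n : ℕ in atTop,
      (((n - s n : ℕ) : ℝ) / (n : ℝ) ^ ((t : ℝ) / ((t : ℝ) + 1)))^(t+1)
        = (n:ℝ) * (((n - s n : ℕ) : ℝ) / (n : ℝ))^(t+1) := by
    filter_upwards [eventually_ge_atTop 1] with n hn
    have hn' : (0:ℝ) < (n:ℝ) := by exact_mod_cast hn
    have h1 : ((n:ℝ) ^ ((t : ℝ) / ((t : ℝ) + 1)))^(t+1) = (n:ℝ)^(t : ℕ) := by
      rw [← Real.rpow_natCast ((n:ℝ) ^ ((t : ℝ) / ((t : ℝ) + 1))) (t+1), ← Real.rpow_mul hn'.le]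
      rw [show (t : ℝ) / ((t : ℝ) + 1) * ((t+1 : ℕ) : ℝ) = (t:ℝ) from by
        push_cast; field_simp]
      exact Real.rpow_natCast _ _
    rw [div_pow, div_pow, h1]
    rw [show (n:ℝ)^(t+1) = (n:ℝ)^t * (n:ℝ) from by rw [← pow_succ]]
    field_simp
  have ha1 : Tendsto (fun n : ℕ => (n:ℝ) * (((n - s n : ℕ) : ℝ) / (n : ℝ))^(t+1))
      atTop (nhds 0) := by
    have hb := hsmall.pow (t+1)
    rw [show (0:ℝ)^(t+1) = 0 from by simp] at hb
    exact hb.congr' key_exp1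
  -- lower bound function tends to 1
  have hlow_tendsto : Tendsto
      (fun n : ℕ => 1 - 1/(1 + (n:ℝ) * (((n - s n : ℕ) : ℝ) / (n : ℝ))^t)) atTop (nhds 1) := by
    have h1 : Tendsto (fun n : ℕ => 1 + (n:ℝ) * (((n - s n : ℕ) : ℝ) / (n : ℝ))^t)
        atTop atTop := tendsto_atTop_add_const_left _ 1 ha0
    have h2 : Tendsto (fun n : ℕ => 1/(1 + (n:ℝ) * (((n - s n : ℕ) : ℝ) / (n : ℝ))^t))
        atTop (nhds 0) := by
      simp only [one_div]
      exact tendsto_inv_atTop_zero.comp h1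
    have := (tendsto_const_nhds (x := (1:ℝ)) (f := atTop (α := ℕ))).sub h2
    simpa using this
  -- bounds on pr at each i ≤ t
  have hpr_low : ∀ i : ℕ, i ≤ t → ∀ᶠ n : ℕ in atTop,
      1 - 1/(1 + (n:ℝ) * (((n - s n : ℕ) : ℝ) / (n : ℝ))^t)
        ≤ pr n (s n) i (fun f => ¬ collected f) := by
    intro i hi
    filter_upwards [hev_m, eventually_ge_atTop 1] with n hm1 hn1
    have hq0 : (0:ℝ) ≤ ((n - s n : ℕ) : ℝ) / (n : ℝ) := by positivity
    have hq1 : ((n - s n : ℕ) : ℝ) / (n : ℝ) ≤ 1 := by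
      rw [div_le_one (by exact_mod_cast hn1 : (0:ℝ) < (n:ℝ))]
      exact_mod_cast Nat.sub_le n (s n)
    have hmono : (n:ℝ) * (((n - s n : ℕ) : ℝ) / (n : ℝ))^t
        ≤ (n:ℝ) * (((n - s n : ℕ) : ℝ) / (n : ℝ))^i := by
      apply mul_le_mul_of_nonneg_left (pow_le_pow_of_le_one hq0 hq1 hi) (by positivity)
    have hlow := pr_lower n (s n) i hn1 (hs n) hm1
    have : 1/(1 + (n:ℝ) * (((n - s n : ℕ) : ℝ) / (n : ℝ))^i)
        ≤ 1/(1 + (n:ℝ) * (((n - s n : ℕ) : ℝ) / (n : ℝ))^t) := by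
      apply one_div_le_one_div_of_le
      · have : (0:ℝ) ≤ (n:ℝ) * (((n - s n : ℕ) : ℝ) / (n : ℝ))^t := by positivity
        linarith
      · linarith
    linarith
  -- pr at t tends to 1
  have hprt : Tendsto (fun n : ℕ => pr n (s n) t (fun f => ¬ collected f)) atTop (nhds 1) := by
    apply tendsto_of_tendsto_of_tendsto_of_le_of_le' hlow_tendsto tendsto_const_nhds
      (hpr_low t le_rfl)
    exact Eventually.of_forall fun n => pr_le_one _ _ _ _
  -- pr at t+1 tends to 0
  have hprt1 : Tendsto (fun n : ℕ => pr n (s n) (t+1) (fun f => ¬ collected f))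
      atTop (nhds 0) := by
    apply squeeze_zero' (t₀ := atTop)
      (Eventually.of_forall fun n => pr_nonneg _ _ _ _) _ ha1
    filter_upwards [eventually_ge_atTop 1] with n hn1
    exact pr_upper n (s n) (t+1) hn1 (hs n)
  constructor
  · -- convergence in probability
    have heq : ∀ n : ℕ, PYeq n (s n) (t+1)
        = pr n (s n) t (fun f => ¬ collected f)
          - pr n (s n) (t+1) (fun f => ¬ collected f) := by
      intro n
      rw [PYeq, if_neg (Nat.succ_ne_zero t), Nat.add_sub_cancel,
        PYle_eq n (s n) (t+1) (hs n), PYle_eq n (s n) t (hs n)]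
      ring
    have := hprt.sub hprt1
    rw [sub_zero] at this
    exact this.congr fun n => (heq n).symm
  · -- convergence of expectation
    have hEbound : ∀ᶠ n : ℕ in atTop,
        ((t:ℝ)+1) * (1 - 1/(1 + (n:ℝ) * (((n - s n : ℕ) : ℝ) / (n : ℝ))^t)) ≤ EY n (s n)
        ∧ EY n (s n) ≤ ((t:ℝ)+1) + 2 * ((n:ℝ) * (((n - s n : ℕ) : ℝ) / (n : ℝ))^(t+1)) := by
      have hlowall : ∀ᶠ n : ℕ in atTop, ∀ i ∈ Finset.range (t+1),
          1 - 1/(1 + (n:ℝ) * (((n - s n : ℕ) : ℝ) / (n : ℝ))^t)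
            ≤ pr n (s n) i (fun f => ¬ collected f) := by
        rw [eventually_all_finset]
        intro i hi
        exact hpr_low i (by simpa [Nat.lt_succ_iff] using Finset.mem_range.1 hi)
      filter_upwards [hev_m, eventually_ge_atTop 1, hq_half, hlowall] with n hm1 hn1 hqh hlo
      set qq : ℝ := ((n - s n : ℕ) : ℝ) / (n : ℝ) with hqq
      have hq0 : (0:ℝ) ≤ qq := by rw [hqq]; positivity
      have hq1 : qq < 1 := lt_of_le_of_lt hqh (by norm_num)
      have hub : ∀ i : ℕ, pr n (s n) i (fun f => ¬ collected f) ≤ (n:ℝ) * qq^i :=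
        fun i => pr_upper n (s n) i hn1 (hs n)
      have hsummable : Summable (fun i => pr n (s n) i (fun f => ¬ collected f)) := by
        apply Summable.of_nonneg_of_le (fun i => pr_nonneg _ _ _ _) hub
        exact (summable_geometric_of_lt_one hq0 hq1).mul_left _
      have hsplit : EY n (s n)
          = (∑ i ∈ Finset.range (t+1), pr n (s n) i (fun f => ¬ collected f))
            + ∑' i, pr n (s n) (i + (t+1)) (fun f => ¬ collected f) := by
        rw [EY, ← Summable.sum_add_tsum_nat_add (t+1) hsummable]
      constructor
      · -- lower bound
        have hfront : ((t:ℝ)+1) * (1 - 1/(1 + (n:ℝ) * qq^t))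
            ≤ ∑ i ∈ Finset.range (t+1), pr n (s n) i (fun f => ¬ collected f) := by
          have := Finset.card_nsmul_le_sum (Finset.range (t+1))
            (fun i => pr n (s n) i (fun f => ¬ collected f))
            (1 - 1/(1 + (n:ℝ) * qq^t)) hlo
          rw [Finset.card_range, nsmul_eq_mul] at this
          push_cast at this ⊢
          linarith
        have htail : (0:ℝ) ≤ ∑' i, pr n (s n) (i + (t+1)) (fun f => ¬ collected f) :=
          tsum_nonneg fun i => pr_nonneg _ _ _ _
        rw [hsplit]
        linarith
      · -- upper bound
        have hfront : ∑ i ∈ Finset.range (t+1), pr n (s n) i (fun f => ¬ collected f)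
            ≤ ((t:ℝ)+1) := by
          have := Finset.sum_le_card_nsmul (Finset.range (t+1))
            (fun i => pr n (s n) i (fun f => ¬ collected f)) 1
            (fun i _ => pr_le_one _ _ _ _)
          rw [Finset.card_range, nsmul_eq_mul] at this
          push_cast at this ⊢
          linarith
        have hsumgeo : Summable (fun i : ℕ => (n:ℝ) * qq^(i + (t+1))) := by
          have : (fun i : ℕ => (n:ℝ) * qq^(i + (t+1)))
              = fun i : ℕ => ((n:ℝ) * qq^(t+1)) * qq^i := by
            funext i
            rw [pow_add]
            ring
          rw [this]
          exact (summable_geometric_of_lt_one hq0 hq1).mul_left _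
        have htail : ∑' i, pr n (s n) (i + (t+1)) (fun f => ¬ collected f)
            ≤ 2 * ((n:ℝ) * qq^(t+1)) := by
          have h1 : ∑' i, pr n (s n) (i + (t+1)) (fun f => ¬ collected f)
              ≤ ∑' i : ℕ, (n:ℝ) * qq^(i + (t+1)) := by
            apply Summable.tsum_le_tsum (fun i => hub (i + (t+1)))
            · exact (summable_nat_add_iff (t+1)).2 hsummable
            · exact hsumgeo
          have h2 : ∑' i : ℕ, (n:ℝ) * qq^(i + (t+1))
              = ((n:ℝ) * qq^(t+1)) * (1 - qq)⁻¹ := by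
            have e : (fun i : ℕ => (n:ℝ) * qq^(i + (t+1)))
                = fun i : ℕ => ((n:ℝ) * qq^(t+1)) * qq^i := by
              funext i
              rw [pow_add]
              ring
            rw [e, tsum_mul_left, tsum_geometric_of_lt_one hq0 hq1]
          have h3 : (1 - qq)⁻¹ ≤ 2 := by
            rw [show (2:ℝ) = (1/2:ℝ)⁻¹ from by norm_num]
            apply inv_anti₀ (by norm_num)
            linarith
          have h4 : ((n:ℝ) * qq^(t+1)) * (1 - qq)⁻¹ ≤ ((n:ℝ) * qq^(t+1)) * 2 := by
            apply mul_le_mul_of_nonneg_left h3 (by positivity)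
          calc ∑' i, pr n (s n) (i + (t+1)) (fun f => ¬ collected f)
              ≤ ∑' i : ℕ, (n:ℝ) * qq^(i + (t+1)) := h1
            _ = ((n:ℝ) * qq^(t+1)) * (1 - qq)⁻¹ := h2
            _ ≤ ((n:ℝ) * qq^(t+1)) * 2 := h4
            _ = 2 * ((n:ℝ) * qq^(t+1)) := by ring
        rw [hsplit]
        linarith
    -- squeeze
    have hlowlim : Tendsto
        (fun n : ℕ => ((t:ℝ)+1) * (1 - 1/(1 + (n:ℝ) * (((n - s n : ℕ) : ℝ) / (n : ℝ))^t)))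
        atTop (nhds ((t:ℝ)+1)) := by
      have := hlow_tendsto.const_mul ((t:ℝ)+1)
      simpa using this
    have huplim : Tendsto
        (fun n : ℕ => ((t:ℝ)+1) + 2 * ((n:ℝ) * (((n - s n : ℕ) : ℝ) / (n : ℝ))^(t+1)))
        atTop (nhds ((t:ℝ)+1)) := by
      have := (ha1.const_mul (2:ℝ)).const_add ((t:ℝ)+1)
      simpa using this
    exact tendsto_of_tendsto_of_tendsto_of_le_of_le' hlowlim huplim
      (hEbound.mono fun n h => h.1) (hEbound.mono fun n h => h.2)
end
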